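/- arXiv:1803.05493 — 4 statements merged into one kernel-verified Lean document; each statement's English description precedes it below -/
import Mathlib

section
/- Let Γ be a finite connected simplicial graph, let v be a cut vertex of Γ, and let g ∈ A(Γ). Then the cosets ⟨v⟩ and g⟨v⟩, regarded as subsets of A(Γ) with the word metric with respect to VΓ, are at finite Hausdorff distance if and only if g ∈ A(star(v)). -/
noncomputable section

universe u v

/-- Word metric (distance function) on a group with respect to a generating set `S`. -/
def wordDist {G : Type*} [Group G] (S : Set G) (g h : G) : ℝ :=
  sInf ((fun l : List G => (l.length : ℝ)) ''
    {l : List G | (∀ x ∈ l, x ∈ S ∨ x⁻¹ ∈ S) ∧ g * l.prod = h})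

/-- `f` is `(K, A)`-coarse Lipschitz. -/
def CoarseLipschitzWith {X Y : Type*} (K A : ℝ) (dX : X → X → ℝ) (dY : Y → Y → ℝ)
    (f : X → Y) : Prop :=
  ∀ x x', dY (f x) (f x') ≤ K * dX x x' + A

/-- `f` is a `(K, A)`-quasi-isometry. -/
def IsQIWith {X Y : Type*} (K A : ℝ) (dX : X → X → ℝ) (dY : Y → Y → ℝ) (f : X → Y) : Prop :=
  1 ≤ K ∧ 0 ≤ A ∧
  (∀ x x', dX x x' / K - A ≤ dY (f x) (f x') ∧ dY (f x) (f x') ≤ K * dX x x' + A) ∧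
  (∀ y, ∃ x, dY (f x) y ≤ A)

/-- `f` is a quasi-isometry. -/
def IsQI {X Y : Type*} (dX : X → X → ℝ) (dY : Y → Y → ℝ) (f : X → Y) : Prop :=
  ∃ K A : ℝ, IsQIWith K A dX dY f

/-- The Hausdorff distance between `S` and `T` (w.r.t. the distance `d`) is at most `r`. -/
def HausLE {X : Type*} (d : X → X → ℝ) (S T : Set X) (r : ℝ) : Prop :=
  (∀ s ∈ S, ∃ t ∈ T, d s t ≤ r) ∧ (∀ t ∈ T, ∃ s ∈ S, d s t ≤ r)

/-- `S` and `T` are at finite Hausdorff distance. -/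
def FinHaus {X : Type*} (d : X → X → ℝ) (S T : Set X) : Prop :=
  ∃ r : ℝ, 0 ≤ r ∧ HausLE d S T r

/-- The commutator relations of a right-angled Artin group. -/
def raagRels {V : Type} (Γ : SimpleGraph V) : Set (FreeGroup V) :=
  {r | ∃ x y : V, Γ.Adj x y ∧
    r = FreeGroup.of x * FreeGroup.of y * (FreeGroup.of x)⁻¹ * (FreeGroup.of y)⁻¹}

/-- The right-angled Artin group `A(Γ)` of a simplicial graph `Γ`. -/
abbrev Raag {V : Type} (Γ : SimpleGraph V) : Type := PresentedGroup (raagRels Γ)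

/-- The generator of `Raag Γ` corresponding to a vertex. -/
def raagGen {V : Type} (Γ : SimpleGraph V) (x : V) : Raag Γ :=
  PresentedGroup.of (rels := raagRels Γ) x

/-- The word metric on `Raag Γ` with respect to the vertex generators. -/
def raagDist {V : Type} (Γ : SimpleGraph V) : Raag Γ → Raag Γ → ℝ :=
  wordDist (Set.range (raagGen Γ))

/-- `A(Γ)` and `A(Λ)` are quasi-isometric (w.r.t. the vertex word metrics). -/
def RaagQI {V W : Type} (Γ : SimpleGraph V) (Λ : SimpleGraph W) : Prop :=
  ∃ f : Raag Γ → Raag Λ, IsQI (raagDist Γ) (raagDist Λ) f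

/-- A standard geodesic: the coset `g⟨v⟩`, recorded by a basepoint `g` and a label `v`. -/
structure StdGeod {V : Type} (Γ : SimpleGraph V) where
  base : Raag Γ
  label : V

/-- The parametrization `n ↦ g vⁿ` of a standard geodesic, identifying it with `ℤ`. -/
def StdGeod.param {V : Type} {Γ : SimpleGraph V} (l : StdGeod Γ) : ℤ → Raag Γ :=
  fun n => l.base * raagGen Γ l.label ^ n

/-- The underlying subset of a standard geodesic. -/
def StdGeod.carrier {V : Type} {Γ : SimpleGraph V} (l : StdGeod Γ) : Set (Raag Γ) :=
  Set.range l.param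

/-- Two standard geodesics are parallel if they are at finite Hausdorff distance. -/
def Parallel {V : Type} {Γ : SimpleGraph V} (l k : StdGeod Γ) : Prop :=
  FinHaus (raagDist Γ) l.carrier k.carrier

/-- A based quasi-isometry `(A(Γ), l) → (A(Λ), l')`. -/
def IsBasedQI {V W : Type} {Γ : SimpleGraph V} {Λ : SimpleGraph W}
    (f : Raag Γ → Raag Λ) (l : StdGeod Γ) (l' : StdGeod Λ) : Prop :=
  IsQI (raagDist Γ) (raagDist Λ) f ∧ FinHaus (raagDist Λ) (f '' l.carrier) l'.carrier

/-- `str(f, l, C) = r`: on `l`, the map `f` is `C`-close to `n ↦ ±⌊r n⌋ + b`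
(read through the identifications of `l` and `l'` with `ℤ`). -/
def StrWith {V W : Type} {Γ : SimpleGraph V} {Λ : SimpleGraph W}
    (f : Raag Γ → Raag Λ) (l : StdGeod Γ) (l' : StdGeod Λ) (C : ℝ) (r : ℚ) : Prop :=
  ∃ ε : ℤ, (ε = 1 ∨ ε = -1) ∧ ∃ b : ℤ,
    ∀ n : ℤ, raagDist Λ (f (l.param n)) (l'.param (ε * ⌊r * (n : ℚ)⌋ + b)) ≤ C

/-- The stretch factor `str(f, l)` (computed with respect to `l'`) is well-defined
and equals `r`. -/
def HasStr {V W : Type} {Γ : SimpleGraph V} {Λ : SimpleGraph W}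
    (f : Raag Γ → Raag Λ) (l : StdGeod Γ) (l' : StdGeod Λ) (r : ℚ) : Prop :=
  ∃ C : ℝ, 0 ≤ C ∧ StrWith f l l' C r

/-- `l` is an `𝓡`-geodesic. -/
def IsRGeod {V : Type} {Γ : SimpleGraph V} (l : StdGeod Γ) : Prop :=
  ∀ (W : Type) [Fintype W] (Λ : SimpleGraph W) (l' : StdGeod Λ)
    (f g : Raag Γ → Raag Λ),
    IsBasedQI f l l' → IsBasedQI g l l' →
    ∃ r : ℚ, HasStr f l l' r ∧ HasStr g l l' r

/-- The parallelism class `𝒮_l` of a standard geodesic (as a family of subsets). -/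
def parClass {V : Type} {Γ : SimpleGraph V} (l : StdGeod Γ) : Set (Set (Raag Γ)) :=
  {S | ∃ k : StdGeod Γ, S = k.carrier ∧ Parallel l k}

/-- The peripheral structure `𝒫_B` on `Raag Γ` determined by a set `B` of vertices. -/
def periph {V : Type} (Γ : SimpleGraph V) (B : Set V) : Set (Set (Set (Raag Γ))) :=
  {F | ∃ l : StdGeod Γ, l.label ∈ B ∧ F = parClass l}

/-- A `(K, A)`-relative quasi-isometry between spaces with peripheral structures. -/
def IsRelQIWith {X Y : Type*} (K A : ℝ) (dX : X → X → ℝ) (dY : Y → Y → ℝ)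
    (PX : Set (Set (Set X))) (PY : Set (Set (Set Y)))
    (f : X → Y) (fs : Set (Set X) → Set (Set Y)) : Prop :=
  IsQIWith K A dX dY f ∧
  Set.BijOn fs PX PY ∧
  ∀ F ∈ PX, (∀ a ∈ F, ∃ b ∈ fs F, HausLE dY (f '' a) b A) ∧
            (∀ b ∈ fs F, ∃ a ∈ F, HausLE dY (f '' a) b A)

/-- The two spaces with peripheral structures are relatively quasi-isometric. -/
def IsRelQI {X Y : Type*} (dX : X → X → ℝ) (dY : Y → Y → ℝ)
    (PX : Set (Set (Set X))) (PY : Set (Set (Set Y))) : Prop :=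
  ∃ (K A : ℝ) (f : X → Y) (fs : Set (Set X) → Set (Set Y)),
    IsRelQIWith K A dX dY PX PY f fs

/-- Left translation of a family of subsets of `Raag Γ`. -/
def translateFam {V : Type} {Γ : SimpleGraph V} (g : Raag Γ) (F : Set (Set (Raag Γ))) :
    Set (Set (Raag Γ)) :=
  (fun a => (fun x => g * x) '' a) '' F

/-- A decoration on `𝒫_B` that is invariant under the left translation action. -/
def DecorInvariant {V : Type} (Γ : SimpleGraph V) (B : Set V) {O : Type}
    (δ : Set (Set (Raag Γ)) → O) : Prop :=
  ∀ g : Raag Γ, ∀ F ∈ periph Γ B, δ (translateFam g F) = δ F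

/-- A decoration-preserving based relative quasi-isometry
`(A(Γ), 𝒫_{BΓ}, δΓ, l) → (A(Λ), 𝒫_{BΛ}, δΛ, l')`. -/
def IsDecorBasedRelQI {V W : Type} (Γ : SimpleGraph V) (Λ : SimpleGraph W)
    (BΓ : Set V) (BΛ : Set W) {O : Type}
    (δΓ : Set (Set (Raag Γ)) → O) (δΛ : Set (Set (Raag Λ)) → O)
    (l : StdGeod Γ) (l' : StdGeod Λ)
    (f : Raag Γ → Raag Λ) (fs : Set (Set (Raag Γ)) → Set (Set (Raag Λ))) : Prop :=
  (∃ K A : ℝ, IsRelQIWith K A (raagDist Γ) (raagDist Λ) (periph Γ BΓ) (periph Λ BΛ) f fs) ∧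
  (∀ F ∈ periph Γ BΓ, δΛ (fs F) = δΓ F) ∧
  FinHaus (raagDist Λ) (f '' l.carrier) l'.carrier

/-- `A(Γ)` is a dovetail RAAG. -/
def Dovetail {V : Type} (Γ : SimpleGraph V) : Prop :=
  ∀ (W : Type) [Fintype W] (Λ : SimpleGraph W) (BΓ : Set V) (BΛ : Set W)
    (O : Type) (δΓ : Set (Set (Raag Γ)) → O) (δΛ : Set (Set (Raag Λ)) → O),
    DecorInvariant Γ BΓ δΓ → DecorInvariant Λ BΛ δΛ →
    ∀ (l : StdGeod Γ) (l' : StdGeod Λ) (f : Raag Γ → Raag Λ)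
      (fs : Set (Set (Raag Γ)) → Set (Set (Raag Λ))),
      IsDecorBasedRelQI Γ Λ BΓ BΛ δΓ δΛ l l' f fs →
      ∀ lam : Set (Set (Raag Γ)) → ℚ,
        (∀ F ∈ periph Γ BΓ, 0 < lam F) →
        (∃ M : ℚ, 1 ≤ M ∧ ∀ F ∈ periph Γ BΓ, 1 / M ≤ lam F ∧ lam F ≤ M) →
        (∀ F ∈ periph Γ BΓ, ∀ F' ∈ periph Γ BΓ, δΓ F = δΓ F' → lam F = lam F') →
        ∃ C : ℝ, 0 ≤ C ∧
          ∃ (g : Raag Γ → Raag Λ) (gs : Set (Set (Raag Γ)) → Set (Set (Raag Λ))),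
            IsDecorBasedRelQI Γ Λ BΓ BΛ δΓ δΛ l l' g gs ∧
            (∀ l2 : StdGeod Γ, l2.label ∈ BΓ → ¬ IsRGeod l2 →
              ∀ l3 : StdGeod Λ, FinHaus (raagDist Λ) (g '' l2.carrier) l3.carrier →
                StrWith g l2 l3 C (lam (parClass l2))) ∧
            (∀ l2 : StdGeod Γ, l2.label ∈ BΓ → IsRGeod l2 →
              ∀ l3 : StdGeod Λ, FinHaus (raagDist Λ) (g '' l2.carrier) l3.carrier →
                ∃ r : ℚ, StrWith g l2 l3 C r)

/-- The closed star of a vertex, as a vertex set. -/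
def starSet {V : Type} (Γ : SimpleGraph V) (x : V) : Set V :=
  insert x {u | Γ.Adj x u}

/-- The link of a vertex, as a vertex set. -/
def lkSet {V : Type} (Γ : SimpleGraph V) (x : V) : Set V := {u | Γ.Adj x u}

/-- The link of `x` inside the induced subgraph on `S`. -/
def lkIn {V : Type} (Γ : SimpleGraph V) (S : Set V) (x : V) : Set V :=
  {u | u ∈ S ∧ Γ.Adj x u}

/-- `x` is a cut vertex: deleting it (and incident edges) disconnects the graph. -/
def CutVertex {V : Type} (Γ : SimpleGraph V) (x : V) : Prop :=
  ¬ (Γ.induce {u : V | u ≠ x}).Preconnected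

/-- The vertex set `S` spans a biconnected subgraph: connected with no cut vertex. -/
def Biconn {V : Type} (Γ : SimpleGraph V) (S : Set V) : Prop :=
  (Γ.induce S).Connected ∧ ∀ x ∈ S, (Γ.induce (S \ {x})).Preconnected

/-- `S` spans a maximal biconnected subgraph. -/
def MaxBiconn {V : Type} (Γ : SimpleGraph V) (S : Set V) : Prop :=
  Biconn Γ S ∧ ∀ T : Set V, Biconn Γ T → S ⊆ T → S = T

/-- The collection `C₁` of maximal biconnected subgraphs: those containing at least
two cut vertices, or not contained in the star of any cut vertex. -/
def C1 {V : Type} (Γ : SimpleGraph V) : Set (Set V) :=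
  {S | MaxBiconn Γ S ∧
    ((∃ x ∈ S, ∃ y ∈ S, x ≠ y ∧ CutVertex Γ x ∧ CutVertex Γ y) ∨
     (∀ x : V, CutVertex Γ x → ¬ S ⊆ starSet Γ x))}

/-- `Γ` is an `n`-clique tree-graded graph. -/
def NCliqueTreeGraded {V : Type} (Γ : SimpleGraph V) (n : ℕ) : Prop :=
  Γ.Connected ∧
  (∀ x : V, CutVertex Γ x ∨ (∃! u : V, Γ.Adj x u)) ∧
  (∃ x y : V, 3 ≤ Γ.dist x y) ∧
  (∀ S : Set V, MaxBiconn Γ S →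
    ((Γ.IsClique S ∧ S.ncard = n ∧ ∀ x ∈ S, CutVertex Γ x) ∨
     (Γ.IsClique S ∧ S.ncard = 2 ∧ ∃! x : V, x ∈ S ∧ CutVertex Γ x)))

/-- The subgroup of `Raag Γ` generated by the vertices in `T`. -/
def subRaag {V : Type} (Γ : SimpleGraph V) (T : Set V) : Subgroup (Raag Γ) :=
  Subgroup.closure (raagGen Γ '' T)

/-- The word metric on the subgroup generated by `T`, w.r.t. the generators from `T`. -/
def subDist {V : Type} (Γ : SimpleGraph V) (T : Set V) :
    ↥(subRaag Γ T) → ↥(subRaag Γ T) → ℝ :=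
  wordDist {x : ↥(subRaag Γ T) | ∃ u ∈ T, (x : Raag Γ) = raagGen Γ u}

/-- The cylinder group `A(star(x))`. -/
def cylGroup {V : Type} (Γ : SimpleGraph V) (x : V) : Subgroup (Raag Γ) :=
  subRaag Γ (starSet Γ x)

/-- The word metric on the cylinder `A(star(x))` w.r.t. the vertices of `star(x)`. -/
def cylDist {V : Type} (Γ : SimpleGraph V) (x : V) :
    ↥(cylGroup Γ x) → ↥(cylGroup Γ x) → ℝ :=
  subDist Γ (starSet Γ x)

/-- The coset `a⟨x⟩`, as a subset of the cylinder `A(star(x))`. -/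
def cylCoset {V : Type} (Γ : SimpleGraph V) (x : V) (a : Raag Γ) :
    Set ↥(cylGroup Γ x) :=
  {g | ∃ n : ℤ, (g : Raag Γ) = a * raagGen Γ x ^ n}

/-- The peripheral structure `𝒫_x` on the cylinder `A(star(x))`: one element for each
coset `g·A(star_{Γ'}(x))` with `Γ' ∈ C₁` containing `x`, namely the family of cosets
`{g·h·⟨x⟩ : h ∈ A(lk_{Γ'}(x))}`. -/
def cylPeriph {V : Type} (Γ : SimpleGraph V) (x : V) :
    Set (Set (Set ↥(cylGroup Γ x))) :=
  {F | ∃ S ∈ C1 Γ, x ∈ S ∧ ∃ g : Raag Γ, g ∈ cylGroup Γ x ∧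
    F = {c | ∃ h ∈ subRaag Γ (lkIn Γ S x), c = cylCoset Γ x (g * h)}}

/-- The factors `A(T) ≤ A(Γ)` and `A(T') ≤ A(Λ)` are quasi-isometric. -/
def FactorQI {V W : Type} (Γ : SimpleGraph V) (Λ : SimpleGraph W)
    (T : Set V) (T' : Set W) : Prop :=
  ∃ φ : ↥(subRaag Γ T) → ↥(subRaag Λ T'), IsQI (subDist Γ T) (subDist Λ T') φ


open Monoid PushoutI Subgroup Function

namespace StmtAux

variable {H : Type} [Group H] {G : Bool → Type} [∀ b, Group (G b)] {φ : ∀ b, H →* G b}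

open Monoid.PushoutI.NormalWord

variable {d : Transversal φ}

theorem letter_notin_range (w : NormalWord d) {l : Σ b, G b} (hl : l ∈ w.toList) :
    l.2 ∉ (φ l.1).range := by
  intro hmem
  have hset : l.2 ∈ d.set l.1 := w.normalized l.1 l.2 (by exact hl)
  have hne : l.2 ≠ 1 := w.ne_one l hl
  have hinj := (d.compl l.1).1
  have : (⟨⟨l.2, hmem⟩, ⟨1, d.one_mem l.1⟩⟩ : ((φ l.1).range : Set (G l.1)) × (d.set l.1))
      = ⟨⟨1, one_mem _⟩, ⟨l.2, hset⟩⟩ := by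
    apply hinj
    simp
  have := congrArg (fun p => (p.1 : G l.1)) this
  exact hne (by simpa using this)

theorem prod_decomp_cons (w : NormalWord d) (l : Σ b, G b) (t : List (Σ b, G b))
    (h : w.toList = l :: t) :
    ∃ w' : NormalWord d, w'.toList = t ∧
      w.prod = base φ w.head * of l.1 l.2 * w'.prod := by
  refine ⟨⟨⟨t, fun p hp => w.ne_one p (h ▸ List.mem_cons_of_mem _ hp),
      (h ▸ w.chain_ne : (l :: t).Chain' _).tail⟩, 1,
      fun i g hg => w.normalized i g (h ▸ List.mem_cons_of_mem _ hg)⟩, rfl, ?_⟩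
  simp only [NormalWord.prod, CoprodI.Word.prod, h, List.map_cons, List.prod_cons, map_one, one_mul,
    map_mul, ofCoprodI_of, mul_assoc]

theorem prod_decomp_concat (w : NormalWord d) (l : Σ b, G b) (t : List (Σ b, G b))
    (h : w.toList = t ++ [l]) :
    ∃ w' : NormalWord d, w'.toList = t ∧
      w.prod = w'.prod * of l.1 l.2 := by
  have hch : (t ++ [l]).Chain' (fun a b => a.1 ≠ b.1) := h ▸ w.chain_ne
  refine ⟨⟨⟨t, fun p hp => w.ne_one p (h ▸ List.mem_append_left _ hp),
      (List.isChain_append.1 hch).1⟩, w.head,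
      fun i g hg => w.normalized i g (h ▸ List.mem_append_left _ hg)⟩, rfl, ?_⟩
  simp only [NormalWord.prod, CoprodI.Word.prod, h, List.map_append, List.prod_append, List.map_cons,
    List.prod_cons, List.map_nil, List.prod_nil, mul_one, map_mul, ofCoprodI_of, mul_assoc]

theorem key (hφ : ∀ b, Injective (φ b)) (x : PushoutI φ)
    (c c' : G false)
    (hc : ∀ s : G false, s * c * s⁻¹ ∉ (φ false).range)
    (hc' : ∀ s : G false, s * c' * s⁻¹ ∉ (φ false).range)
    (hx : x * of false c = of false c' * x) :
    x ∈ (of (φ := φ) false).range := by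
  classical
  obtain ⟨d⟩ := transversal_nonempty φ hφ
  suffices hmain : ∀ (n : ℕ) (w : NormalWord d), w.toList.length ≤ n →
      ∀ c c' : G false, (∀ s : G false, s * c * s⁻¹ ∉ (φ false).range) →
      (∀ s : G false, s * c' * s⁻¹ ∉ (φ false).range) →
      w.prod * of false c = of false c' * w.prod →
      w.prod ∈ (of (φ := φ) false).range by
    have hxw : (x • (NormalWord.empty : NormalWord d)).prod = x := by
      rw [NormalWord.prod_smul, NormalWord.prod_empty, mul_one]
    have := hmain (x • (NormalWord.empty : NormalWord d)).toList.length _ le_rfl c c' hc hc'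
      (by rw [hxw]; exact hx)
    rwa [hxw] at this
  intro n
  induction n with
  | zero =>
    intro w hw c c' _ _ _
    have hnil : w.toList = [] := List.length_eq_zero_iff.1 (Nat.le_zero.1 hw)
    refine ⟨φ false w.head, ?_⟩
    rw [of_apply_eq_base]
    simp [NormalWord.prod, CoprodI.Word.prod, hnil]
  | succ n ih =>
    intro w hw c c' hc hc' heq
    rcases hl : w.toList with _ | ⟨⟨i, g⟩, t⟩
    · refine ⟨φ false w.head, ?_⟩
      rw [of_apply_eq_base]
      simp [NormalWord.prod, CoprodI.Word.prod, hl]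
    · cases i with
      | false =>
        obtain ⟨w', ht', hprod⟩ := prod_decomp_cons w _ _ hl
        set s : G false := φ false w.head * g with hs
        have hx2 : w.prod = of false s * w'.prod := by
          rw [hprod, hs, map_mul, of_apply_eq_base]
        have heq' : w'.prod * of false c = of false (s⁻¹ * c' * s) * w'.prod := by
          have h1 : of false s * (w'.prod * of false c) =
              of false s * (of false (s⁻¹ * c' * s) * w'.prod) := by
            rw [← mul_assoc, ← hx2, heq, hx2]
            simp only [map_mul, map_inv]
            group
          exact mul_left_cancel h1
        have hc'' : ∀ u : G false, u * (s⁻¹ * c' * s) * u⁻¹ ∉ (φ false).range := fun u => by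
          simpa [mul_assoc] using hc' (u * s⁻¹)
        have hlen : w'.toList.length ≤ n := by
          have h2 := hw
          rw [hl] at h2
          rw [ht']
          simpa using h2
        obtain ⟨y, hy⟩ := ih w' hlen c (s⁻¹ * c' * s) hc hc'' heq'
        rw [hx2]
        exact mul_mem ⟨s, rfl⟩ ⟨y, hy⟩
      | true =>
        -- inspect the last letter
        have hne : w.toList ≠ [] := by rw [hl]; simp
        obtain ⟨t', lN, hconcat⟩ := (List.eq_nil_or_concat w.toList).resolve_left hne
        rw [List.concat_eq_append] at hconcat
        obtain ⟨j, gN⟩ := lN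
        cases j with
        | false =>
          obtain ⟨w', ht', hprod⟩ := prod_decomp_concat w _ _ hconcat
          have heq' : w'.prod * of false (gN * c * gN⁻¹) = of false c' * w'.prod := by
            have h1 : w'.prod * of false (gN * c * gN⁻¹) * of false gN =
                of false c' * w'.prod * of false gN := by
              simp only [map_mul, map_inv]
              calc w'.prod * ((PushoutI.of false) gN * (PushoutI.of false) c *
                    ((PushoutI.of false) gN)⁻¹) * (PushoutI.of false) gN
                  = (w'.prod * (PushoutI.of false) gN) * (PushoutI.of false) c := by group
                _ = of false c' * (w'.prod * (PushoutI.of false) gN) := by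
                    rw [← hprod]; exact heq
                _ = of false c' * w'.prod * (PushoutI.of false) gN := by group
            exact mul_right_cancel h1
          have hc2 : ∀ u : G false, u * (gN * c * gN⁻¹) * u⁻¹ ∉ (φ false).range := fun u => by
            simpa [mul_assoc] using hc (u * gN)
          have hlen : w'.toList.length ≤ n := by
            have h2 := hw
            rw [hconcat] at h2
            rw [ht']
            simp only [List.length_append, List.length_cons, List.length_nil] at h2
            omega
          obtain ⟨y, hy⟩ := ih w' hlen (gN * c * gN⁻¹) c' hc2 hc' heq'
          rw [hprod]
          exact mul_mem ⟨y, hy⟩ ⟨gN, rfl⟩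
        | true =>
          exfalso
          set L := w.toList with hLdef
          set finv : (Σ b, G b) → (Σ b, G b) := fun p => ⟨p.1, p.2⁻¹⟩ with hfinv
          set c₃ : G false := (φ false w.head)⁻¹ * c' * (φ false w.head) with hc₃def
          have hc₃ : c₃ ∉ (φ false).range := by
            have := hc' (φ false w.head)⁻¹
            simpa [hc₃def, mul_assoc] using this
          have hcr : c ∉ (φ false).range := by simpa using hc 1
          have hc1 : c ≠ 1 := fun h => hcr (h ▸ one_mem _)
          have hlet : ∀ l ∈ L, Sigma.snd l ∉ (φ l.1).range := fun l hl' =>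
            letter_notin_range w hl'
          have hne1 : ∀ l ∈ L, Sigma.snd l ≠ 1 := fun l hl' => w.ne_one l hl'
          have hgetLast : L.getLast? = some ⟨true, gN⟩ := by
            rw [hconcat]
            exact List.getLast?_concat
          have hrevhead : (L.reverse.map finv).head? = some ⟨true, gN⁻¹⟩ := by
            rw [List.head?_map, List.head?_reverse, hgetLast]
            rfl
          -- the conjugated word
          have hMchain : (L ++ ⟨false, c⟩ :: (L.reverse.map finv)).Chain'
              (fun a b => a.1 ≠ b.1) := by
            show List.IsChain _ _
            rw [List.isChain_append]
            refine ⟨w.chain_ne, ?_, ?_⟩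
            · rw [List.isChain_cons]
              constructor
              · intro y hy
                rw [hrevhead, Option.mem_some_iff] at hy
                subst hy
                simp
              · rw [List.isChain_map]
                have : List.Chain' (fun a b : Σ b, G b => b.1 ≠ a.1) L.reverse := by
                  show List.IsChain _ _
                  rw [List.isChain_reverse]
                  exact w.chain_ne
                exact this.imp (fun {a b} h => by simpa [hfinv] using h.symm)
            · intro p hp y hy
              rw [hgetLast, Option.mem_some_iff] at hp
              simp only [List.head?_cons, Option.mem_some_iff] at hy
              subst hp; subst hy
              simp
          have hMne : ∀ l ∈ (L ++ ⟨false, c⟩ :: (L.reverse.map finv)),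
              Sigma.snd l ≠ 1 := by
            intro l hm
            rcases List.mem_append.1 hm with h1 | h2
            · exact hne1 l h1
            · rcases List.mem_cons.1 h2 with rfl | h3
              · exact hc1
              · obtain ⟨p, hp, rfl⟩ := List.mem_map.1 h3
                have := hne1 p (List.mem_reverse.1 hp)
                simpa [finv] using this
          set M : CoprodI.Word G :=
            ⟨L ++ ⟨false, c⟩ :: (L.reverse.map finv), hMne, hMchain⟩ with hMdef
          have hMred : Reduced φ M := by
            intro l hm
            rcases List.mem_append.1 hm with h1 | h2
            · exact hlet l h1
            · rcases List.mem_cons.1 h2 with rfl | h3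
              · exact hcr
              · obtain ⟨p, hp, rfl⟩ := List.mem_map.1 h3
                have := hlet p (List.mem_reverse.1 hp)
                simpa [finv] using this
          -- compute the product of M
          have hMprod : ofCoprodI (φ := φ) M.prod =
              ofCoprodI (φ := φ) w.toWord.prod * of false c * (ofCoprodI (φ := φ) w.toWord.prod)⁻¹ := by
            have h3 : ((L.reverse.map finv).map (fun l : Σ b, G b => CoprodI.of l.2)).prod
                = (w.toWord.prod)⁻¹ := by
              rw [List.map_map]
              have hfun : ((fun l : Σ b, G b => CoprodI.of l.2) ∘ finv)
                  = (fun l : Σ b, G b => (CoprodI.of l.2)⁻¹) := by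
                funext p
                simp [hfinv]
              rw [hfun]
              have h4 : (L.reverse.map (fun l : Σ b, G b => (CoprodI.of l.2)⁻¹))
                  = ((L.map (fun l : Σ b, G b => CoprodI.of l.2)).map (fun x => x⁻¹)).reverse := by
                simp [List.map_map, Function.comp_def]
              rw [h4]
              exact (List.prod_inv_reverse _).symm
            simp only [CoprodI.Word.prod, hMdef, List.map_append, List.prod_append,
              List.map_cons, List.prod_cons]
            rw [h3]
            simp only [map_mul, map_inv, ofCoprodI_of]
            rw [mul_assoc]
            rfl
          -- derive the equation
          have hXeq : ofCoprodI (φ := φ) w.toWord.prod * of false c * (ofCoprodI (φ := φ) w.toWord.prod)⁻¹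
              = of false c₃ := by
            have hwprod : w.prod = base φ w.head * ofCoprodI (φ := φ) w.toWord.prod := rfl
            rw [hwprod] at heq
            have : ofCoprodI (φ := φ) w.toWord.prod * of false c =
                (base φ w.head)⁻¹ * of false c' * base φ w.head *
                  ofCoprodI (φ := φ) w.toWord.prod := by
              have := heq
              calc ofCoprodI (φ := φ) w.toWord.prod * of false c
                  = (base φ w.head)⁻¹ * (base φ w.head * ofCoprodI (φ := φ) w.toWord.prod *
                      of false c) := by group
                _ = (base φ w.head)⁻¹ * (of false c' * (base φ w.head *
                      ofCoprodI (φ := φ) w.toWord.prod)) := by rw [heq]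
                _ = (base φ w.head)⁻¹ * of false c' * base φ w.head *
                      ofCoprodI (φ := φ) w.toWord.prod := by group
            rw [hc₃def]
            simp only [map_mul, map_inv, of_apply_eq_base]
            rw [this]
            group
          have hMrange : ofCoprodI (φ := φ) M.prod ∈ (base φ).range → M = CoprodI.Word.empty :=
            fun h => hMred.eq_empty_of_mem_range hφ h
          -- final word
          have hc₃ne : c₃⁻¹ ≠ 1 := by
            intro h
            apply hc₃
            have : c₃ = 1 := by rwa [inv_eq_one] at h
            exact this ▸ one_mem _
          have hMhead : M.toList.head? = some ⟨true, g⟩ := by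
            show (L ++ ⟨false, c⟩ :: (L.reverse.map finv)).head? = some ⟨true, g⟩
            rw [hl]
            rfl
          have hM'chain : (⟨false, c₃⁻¹⟩ :: M.toList).Chain' (fun a b : Σ b, G b => a.1 ≠ b.1) := by
            show List.IsChain _ _
            rw [List.isChain_cons]
            refine ⟨?_, M.chain_ne⟩
            intro y hy
            rw [hMhead, Option.mem_some_iff] at hy
            subst hy
            simp
          have hM'ne : ∀ l ∈ (⟨false, c₃⁻¹⟩ :: M.toList), Sigma.snd l ≠ 1 := by
            intro l hm
            rcases List.mem_cons.1 hm with rfl | h2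
            · exact hc₃ne
            · exact M.ne_one l h2
          set M' : CoprodI.Word G := ⟨⟨false, c₃⁻¹⟩ :: M.toList, hM'ne, hM'chain⟩ with hM'def
          have hM'red : Reduced φ M' := by
            intro l hm
            rcases List.mem_cons.1 hm with rfl | h2
            · simp only
              intro hmem
              exact hc₃ ((inv_mem_iff).1 hmem)
            · exact hMred l h2
          have hM'prod : ofCoprodI (φ := φ) M'.prod = 1 := by
            have : M'.prod = CoprodI.of (i := false) c₃⁻¹ * M.prod := by
              simp [hM'def, CoprodI.Word.prod]
            rw [this, map_mul, ofCoprodI_of, hMprod, hXeq]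
            simp
          have := hM'red.eq_empty_of_mem_range hφ (by rw [hM'prod]; exact one_mem _)
          have hcontra := congrArg CoprodI.Word.toList this
          simp [hM'def, CoprodI.Word.empty] at hcontra

end StmtAux

namespace StmtAux2

open Monoid PushoutI Subgroup Function

attribute [local instance] Classical.propDecidable

theorem prod_commute_aux {A B : Type} [Group A] [Group B] (a : A) (b : B) :
    Commute ((a, 1) : A × B) ((1, b) : A × B) := by
  show _ = _
  simp [Prod.ext_iff]

section RaagBasics

variable {V : Type} (Γ : SimpleGraph V)

theorem raag_rel {x y : V} (h : Γ.Adj x y) : Commute (raagGen Γ x) (raagGen Γ y) := by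
  have hmem : (FreeGroup.of x * FreeGroup.of y * (FreeGroup.of x)⁻¹ * (FreeGroup.of y)⁻¹) ∈
      Subgroup.normalClosure (raagRels Γ) :=
    Subgroup.subset_normalClosure ⟨x, y, h, rfl⟩
  have h1 : (raagGen Γ x) * raagGen Γ y * (raagGen Γ x)⁻¹ * (raagGen Γ y)⁻¹ = 1 := by
    have : ((QuotientGroup.mk (FreeGroup.of x * FreeGroup.of y * (FreeGroup.of x)⁻¹ *
        (FreeGroup.of y)⁻¹) : PresentedGroup (raagRels Γ))) = 1 :=
      (QuotientGroup.eq_one_iff _).2 hmem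
    exact this
  open scoped commutatorElement in have h2 : ⁅raagGen Γ x, raagGen Γ y⁆ = 1 := h1
  exact commutatorElement_eq_one_iff_commute.1 h2

variable {K : Type} [Group K]

/-- Lift a vertex map satisfying the commutation relations to a homomorphism on the RAAG. -/
def raagLift (f : V → K) (hf : ∀ x y, Γ.Adj x y → Commute (f x) (f y)) : Raag Γ →* K :=
  PresentedGroup.toGroup (f := f) (by
    rintro r ⟨x, y, hxy, rfl⟩
    simp only [map_mul, map_inv, FreeGroup.lift_apply_of]
    exact commutatorElement_eq_one_iff_commute.2 (hf x y hxy))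

@[simp]
theorem raagLift_gen (f : V → K) (hf : ∀ x y, Γ.Adj x y → Commute (f x) (f y)) (x : V) :
    raagLift Γ f hf (raagGen Γ x) = f x :=
  PresentedGroup.toGroup.of _

theorem raagHom_ext {f g : Raag Γ →* K}
    (h : ∀ x, f (raagGen Γ x) = g (raagGen Γ x)) : f = g :=
  PresentedGroup.ext h

end RaagBasics

section Decomp

variable {V : Type} (Γ : SimpleGraph V) (v : V)

/-- The vertex set of `Γ` minus `v`. -/
def Dset : Set V := {u : V | u ≠ v}

/-- The RAAG on the link of `v`. -/
abbrev RL := Raag (Γ.induce (lkSet Γ v))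

/-- The RAAG on the graph minus `v`. -/
abbrev RD := Raag (Γ.induce (Dset v))

theorem adj_induce_lk {x y : ↥(lkSet Γ v)} (h : Γ.Adj x.1 y.1) :
    (Γ.induce (lkSet Γ v)).Adj x y := h

theorem adj_induce_D {x y : ↥(Dset (V := V) v)} (h : Γ.Adj x.1 y.1) :
    (Γ.induce (Dset v)).Adj x y := h

theorem adj_of_induce_lk {x y : ↥(lkSet Γ v)} (h : (Γ.induce (lkSet Γ v)).Adj x y) :
    Γ.Adj x.1 y.1 := h

theorem adj_of_induce_D {x y : ↥(Dset (V := V) v)} (h : (Γ.induce (Dset v)).Adj x y) :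
    Γ.Adj x.1 y.1 := h

/-- Inclusion of link vertices into `V ∖ {v}`. -/
def lkSub (u : ↥(lkSet Γ v)) : ↥(Dset (V := V) v) := ⟨u.1, (u.2 : Γ.Adj v u.1).ne'⟩

/-- The map `A(lk v) → A(Γ ∖ v)`. -/
def φt : RL Γ v →* RD Γ v :=
  raagLift _ (fun u => raagGen _ (lkSub Γ v u))
    (fun x y hxy => raag_rel _
      (adj_induce_D Γ v (x := lkSub Γ v x) (y := lkSub Γ v y) (adj_of_induce_lk Γ v hxy)))

/-- The retraction `A(Γ ∖ v) → A(lk v)`. -/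
def ρlk : RD Γ v →* RL Γ v :=
  raagLift _ (fun u => if h : Γ.Adj v u.1 then raagGen _ (⟨u.1, h⟩ : ↥(lkSet Γ v)) else 1)
    (by
      intro x y hxy
      beta_reduce
      by_cases hx : Γ.Adj v x.1
      · by_cases hy : Γ.Adj v y.1
        · rw [dif_pos hx, dif_pos hy]
          exact raag_rel _
            (adj_induce_lk Γ v (x := ⟨x.1, hx⟩) (y := ⟨y.1, hy⟩) (adj_of_induce_D Γ v hxy))
        · rw [dif_pos hx, dif_neg hy]
          exact Commute.one_right _
      · rw [dif_neg hx]
        exact Commute.one_left _)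

theorem φt_injective : Function.Injective (φt Γ v) := by
  have h : (ρlk Γ v).comp (φt Γ v) = MonoidHom.id (RL Γ v) := by
    apply raagHom_ext
    intro x
    simp only [MonoidHom.coe_comp, Function.comp_apply, MonoidHom.id_apply, φt, ρlk, raagLift_gen]
    dsimp only [lkSub]
    exact dif_pos (show Γ.Adj v (x : V) from x.2)
  intro a b hab
  have := congrArg (ρlk Γ v) hab
  have h1 := DFunLike.congr_fun h a
  have h2 := DFunLike.congr_fun h b
  simp only [MonoidHom.coe_comp, Function.comp_apply, MonoidHom.id_apply] at h1 h2
  rw [h1, h2] at this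
  exact this

/-- The family of the two vertex groups of the amalgam decomposition. -/
abbrev GF : Bool → Type := fun b => Bool.rec (Multiplicative ℤ × RL Γ v) (RD Γ v) b

instance instGroupGF : ∀ b, Group (GF Γ v b) := fun b =>
  Bool.rec (inferInstanceAs (Group (Multiplicative ℤ × RL Γ v)))
    (inferInstanceAs (Group (RD Γ v))) b

/-- The inclusion `A(lk v) → ℤ × A(lk v)`. -/
def φ0 : RL Γ v →* Multiplicative ℤ × RL Γ v :=
  MonoidHom.prod 1 (MonoidHom.id _)

theorem φ0_injective : Function.Injective (φ0 Γ v) := fun a b hab =>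
  congrArg Prod.snd hab

/-- The amalgam diagram. -/
def φfam : ∀ b, RL Γ v →* GF Γ v b := fun b =>
  Bool.rec (motive := fun b => RL Γ v →* GF Γ v b) (φ0 Γ v) (φt Γ v) b

theorem φfam_injective : ∀ b, Function.Injective (φfam Γ v b) := fun b =>
  Bool.rec (motive := fun b => Function.Injective (φfam Γ v b))
    (φ0_injective Γ v) (φt_injective Γ v) b

/-- The map `A(Γ) → A(st v) *_{A(lk v)} A(Γ ∖ v)`. -/
def τam : Raag Γ →* PushoutI (φfam Γ v) :=
  raagLift Γ
    (fun u => if h : u = v then PushoutI.of (φ := φfam Γ v) false (Multiplicative.ofAdd 1, 1)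
      else PushoutI.of (φ := φfam Γ v) true (raagGen _ (⟨u, h⟩ : ↥(Dset (V := V) v))))
    (by
      have keylem : ∀ z : V, ∀ hz : Γ.Adj v z, ∀ hne : z ≠ v,
          PushoutI.of (φ := φfam Γ v) true (raagGen _ (⟨z, hne⟩ : ↥(Dset (V := V) v)))
          = PushoutI.of (φ := φfam Γ v) false (1, raagGen _ (⟨z, hz⟩ : ↥(lkSet Γ v))) := by
        intro z hz hne
        have h1 : raagGen (Γ.induce (Dset (V := V) v)) ⟨z, hne⟩
            = φfam Γ v true (raagGen _ (⟨z, hz⟩ : ↥(lkSet Γ v))) := by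
          show _ = φt Γ v _
          rw [φt, raagLift_gen]
          rfl
        rw [h1, of_apply_eq_base, ← of_apply_eq_base (φfam Γ v) false]
        rfl
      intro x y hxy
      beta_reduce
      by_cases hx : x = v
      · have hvy : Γ.Adj v y := hx ▸ hxy
        rw [dif_pos hx, dif_neg hvy.ne', keylem y hvy hvy.ne']
        exact Commute.map (prod_commute_aux (Multiplicative.ofAdd 1) _) _
      · by_cases hy : y = v
        · have hvx : Γ.Adj v x := hy ▸ hxy.symm
          rw [dif_pos hy, dif_neg hx, keylem x hvx hx]
          exact (Commute.map (prod_commute_aux (Multiplicative.ofAdd 1) _) _).symm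
        · rw [dif_neg hx, dif_neg hy]
          exact Commute.map
            (raag_rel _ (adj_induce_D Γ v (x := ⟨x, hx⟩) (y := ⟨y, hy⟩) hxy)) _)

/-- The inclusion `A(lk v) → A(Γ)`. -/
def ιL : RL Γ v →* Raag Γ :=
  raagLift _ (fun u => raagGen Γ u.1)
    (fun x y hxy => raag_rel _ (adj_of_induce_lk Γ v hxy))

/-- The inclusion `A(Γ ∖ v) → A(Γ)`. -/
def ιD : RD Γ v →* Raag Γ :=
  raagLift _ (fun u => raagGen Γ u.1)
    (fun x y hxy => raag_rel _ (adj_of_induce_D Γ v hxy))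

theorem ιL_mem_star (h : RL Γ v) : ιL Γ v h ∈ subRaag Γ (starSet Γ v) := by
  have : h ∈ (subRaag Γ (starSet Γ v)).comap (ιL Γ v) := by
    apply PresentedGroup.generated_by
    intro u
    simp only [Subgroup.mem_comap]
    have : ιL Γ v (raagGen _ u) = raagGen Γ u.1 := raagLift_gen _ _ _ _
    rw [show (PresentedGroup.of u : RL Γ v) = raagGen _ u from rfl, this]
    exact Subgroup.subset_closure ⟨u.1, Set.mem_insert_of_mem _ u.2, rfl⟩
  exact this

theorem commute_gen_ιL (h : RL Γ v) : Commute (raagGen Γ v) (ιL Γ v h) := by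
  have : h ∈ (Subgroup.centralizer {raagGen Γ v}).comap (ιL Γ v) := by
    apply PresentedGroup.generated_by
    intro u
    simp only [Subgroup.mem_comap]
    have h1 : ιL Γ v (raagGen _ u) = raagGen Γ u.1 := raagLift_gen _ _ _ _
    rw [show (PresentedGroup.of u : RL Γ v) = raagGen _ u from rfl, h1]
    rw [Subgroup.mem_centralizer_iff]
    rintro y hy
    rw [Set.mem_singleton_iff] at hy
    subst hy
    exact (raag_rel Γ u.2).eq
  have h2 := Subgroup.mem_comap.1 this
  rw [Subgroup.mem_centralizer_iff] at h2
  exact h2 _ rfl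

/-- `ℤ × A(lk v) → A(Γ)`. -/
def f0 : Multiplicative ℤ × RL Γ v →* Raag Γ :=
  MonoidHom.noncommCoprod ((zpowersHom (Raag Γ)) (raagGen Γ v)) (ιL Γ v)
    (by
      intro m h
      show Commute (raagGen Γ v ^ m.toAdd) _
      exact (commute_gen_ιL Γ v h).zpow_left _)

/-- The map `A(st v) *_{A(lk v)} A(Γ ∖ v) → A(Γ)`. -/
def σam : PushoutI (φfam Γ v) →* Raag Γ :=
  PushoutI.lift (fun b => Bool.rec (motive := fun b => GF Γ v b →* Raag Γ)
      (f0 Γ v) (ιD Γ v) b) (ιL Γ v)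
    (by
      intro b
      cases b with
      | false =>
        apply raagHom_ext
        intro u
        show f0 Γ v (φ0 Γ v (raagGen _ u)) = ιL Γ v (raagGen _ u)
        rw [φ0]
        simp only [MonoidHom.prod_apply, MonoidHom.one_apply, MonoidHom.id_apply]
        rw [f0, MonoidHom.noncommCoprod_apply]
        simp
      | true =>
        apply raagHom_ext
        intro u
        show ιD Γ v (φt Γ v (raagGen _ u)) = ιL Γ v (raagGen _ u)
        rw [φt, ιL, raagLift_gen, raagLift_gen]
        show ιD Γ v (raagGen _ (lkSub Γ v u)) = _
        rw [ιD, raagLift_gen]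
        rfl)

theorem σam_τam (x : Raag Γ) : σam Γ v (τam Γ v x) = x := by
  have h : (σam Γ v).comp (τam Γ v) = MonoidHom.id (Raag Γ) := by
    apply raagHom_ext
    intro u
    simp only [MonoidHom.coe_comp, Function.comp_apply, MonoidHom.id_apply]
    rw [τam, raagLift_gen]
    by_cases hu : u = v
    · rw [dif_pos hu, σam, PushoutI.lift_of]
      show f0 Γ v _ = _
      rw [f0, MonoidHom.noncommCoprod_apply]
      simp only [map_one, mul_one]
      show raagGen Γ v ^ (Multiplicative.toAdd (Multiplicative.ofAdd (1 : ℤ))) = raagGen Γ u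
      rw [hu]
      simp
    · rw [dif_neg hu, σam, PushoutI.lift_of]
      show ιD Γ v _ = _
      rw [ιD, raagLift_gen]
  exact DFunLike.congr_fun h x

/-- The centralizer theorem we need: anything commuting with a nonzero power of `v`
lies in `A(st v)`. -/
theorem mem_star_of_commute_pow (g : Raag Γ) (a : ℤ) (ha : a ≠ 0)
    (h : g * raagGen Γ v ^ a = raagGen Γ v ^ a * g) : g ∈ cylGroup Γ v := by
  set c : GF Γ v false := ((Multiplicative.ofAdd 1, 1) : Multiplicative ℤ × RL Γ v) ^ a with hc
  have hτgen : τam Γ v (raagGen Γ v)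
      = PushoutI.of (φ := φfam Γ v) false (Multiplicative.ofAdd 1, 1) := by
    rw [τam, raagLift_gen]
    rw [dif_pos rfl]
  have hτv : τam Γ v (raagGen Γ v ^ a) = PushoutI.of (φ := φfam Γ v) false c := by
    rw [map_zpow, hτgen, ← map_zpow]
  have hcfst : (c : Multiplicative ℤ × RL Γ v).1 = Multiplicative.ofAdd a := by
    have h1 : (c : Multiplicative ℤ × RL Γ v).1
        = (MonoidHom.fst (Multiplicative ℤ) (RL Γ v)) c := rfl
    rw [h1, hc, map_zpow]
    apply Multiplicative.toAdd.injective
    simp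
  have hcne : ∀ s : GF Γ v false, s * c * s⁻¹ ∉ (φfam Γ v false).range := by
    rintro s ⟨h', hh'⟩
    have h1 : (φfam Γ v false h').1 = 1 := rfl
    rw [hh'] at h1
    have h2 : (s * c * s⁻¹ : Multiplicative ℤ × RL Γ v).1 = Multiplicative.ofAdd a := by
      show s.1 * (c : Multiplicative ℤ × RL Γ v).1 * s.1⁻¹ = _
      rw [hcfst, mul_comm, inv_mul_cancel_left]
    rw [h1] at h2
    have : a = 0 := by
      have := congrArg Multiplicative.toAdd h2.symm
      simpa using this
    exact ha this
  have hx : τam Γ v g * PushoutI.of (φ := φfam Γ v) false c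
      = PushoutI.of (φ := φfam Γ v) false c * τam Γ v g := by
    rw [← hτv, ← map_mul, h, map_mul, hτv]
  obtain ⟨y, hy⟩ := StmtAux.key (φfam_injective Γ v) (τam Γ v g) c c hcne hcne hx
  obtain ⟨m, h₀⟩ := y
  have hg : g = σam Γ v (PushoutI.of (φ := φfam Γ v) false (m, h₀)) := by
    rw [hy, σam_τam]
  rw [hg, σam, PushoutI.lift_of]
  show f0 Γ v (m, h₀) ∈ cylGroup Γ v
  rw [f0, MonoidHom.noncommCoprod_apply]
  apply mul_mem
  · show (zpowersHom (Raag Γ)) (raagGen Γ v) m ∈ cylGroup Γ v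
    rw [zpowersHom_apply]
    refine zpow_mem (Subgroup.subset_closure ?_) _
    exact ⟨v, Set.mem_insert _ _, rfl⟩
  · exact ιL_mem_star Γ v h₀

end Decomp

end StmtAux2

namespace StmtAux3

open Subgroup Function

attribute [local instance] Classical.propDecidable

section Metric

variable {V : Type} (Γ : SimpleGraph V) (v : V)

/-- The generating set. -/
def S : Set (Raag Γ) := Set.range (raagGen Γ)

theorem gen_closure_top : Subgroup.closure (S Γ) = ⊤ :=
  PresentedGroup.closure_range_of (raagRels Γ)

theorem exists_word (x : Raag Γ) :
    ∃ l : List (Raag Γ), (∀ y ∈ l, y ∈ S Γ ∨ y⁻¹ ∈ S Γ) ∧ l.prod = x := by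
  have hx : x ∈ Subgroup.closure (S Γ) := by rw [gen_closure_top]; trivial
  have hx2 : x ∈ Submonoid.closure (S Γ ∪ (S Γ)⁻¹) := by
    rw [← Subgroup.closure_toSubmonoid]
    exact hx
  obtain ⟨l, hl, hprod⟩ := Submonoid.exists_list_of_mem_closure hx2
  exact ⟨l, fun y hy => (hl y hy).imp id (fun h => Set.mem_inv.1 h), hprod⟩

theorem wordDist_nonneg (a b : Raag Γ) : 0 ≤ wordDist (S Γ) a b := by
  apply Real.sInf_nonneg
  rintro x ⟨l, -, rfl⟩
  positivity

theorem wordDist_le (a b : Raag Γ) (l : List (Raag Γ))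
    (hl : ∀ y ∈ l, y ∈ S Γ ∨ y⁻¹ ∈ S Γ) (hprod : a * l.prod = b) :
    wordDist (S Γ) a b ≤ l.length := by
  apply csInf_le
  · exact ⟨0, by rintro x ⟨l', -, rfl⟩; positivity⟩
  · exact ⟨l, ⟨hl, hprod⟩, rfl⟩

theorem exists_short (a b : Raag Γ) (r : ℝ) (hr : 0 ≤ r) (h : wordDist (S Γ) a b ≤ r) :
    ∃ l : List (Raag Γ), (∀ y ∈ l, y ∈ S Γ ∨ y⁻¹ ∈ S Γ) ∧ a * l.prod = b ∧
      l.length ≤ Nat.floor r := by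
  by_contra hcon
  push_neg at hcon
  have hne : ∃ l : List (Raag Γ), (∀ y ∈ l, y ∈ S Γ ∨ y⁻¹ ∈ S Γ) ∧ a * l.prod = b := by
    obtain ⟨l, hc, hp⟩ := exists_word Γ (a⁻¹ * b)
    exact ⟨l, hc, by rw [hp, mul_inv_cancel_left]⟩
  obtain ⟨l₀, hc₀, hp₀⟩ := hne
  have hlb : ∀ x ∈ ((fun l : List (Raag Γ) => (l.length : ℝ)) ''
      {l : List (Raag Γ) | (∀ y ∈ l, y ∈ S Γ ∨ y⁻¹ ∈ S Γ) ∧ a * l.prod = b}),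
      ((Nat.floor r : ℕ) : ℝ) + 1 ≤ x := by
    rintro x ⟨l, ⟨hc, hp⟩, rfl⟩
    have := hcon l hc hp
    have h2 : Nat.floor r + 1 ≤ l.length := this
    calc ((Nat.floor r : ℕ) : ℝ) + 1 = ((Nat.floor r + 1 : ℕ) : ℝ) := by push_cast; ring
      _ ≤ (l.length : ℝ) := by exact_mod_cast h2
  have hge : ((Nat.floor r : ℕ) : ℝ) + 1 ≤ wordDist (S Γ) a b := by
    apply le_csInf
    · exact ⟨(l₀.length : ℝ), ⟨l₀, ⟨hc₀, hp₀⟩, rfl⟩⟩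
    · exact hlb
  have hlt : r < ((Nat.floor r : ℕ) : ℝ) + 1 := Nat.lt_floor_add_one r
  linarith

/-- The decoding map for lists over `V ⊕ V`. -/
def decode : V ⊕ V → Raag Γ := Sum.elim (raagGen Γ) (fun u => (raagGen Γ u)⁻¹)

theorem encode_list : ∀ l : List (Raag Γ), (∀ y ∈ l, y ∈ S Γ ∨ y⁻¹ ∈ S Γ) →
    ∃ l' : List (V ⊕ V), (l'.map (decode Γ)) = l := by
  intro l
  induction l with
  | nil => exact fun _ => ⟨[], rfl⟩
  | cons y l ih =>
    intro h
    obtain ⟨l', hl'⟩ := ih (fun z hz => h z (List.mem_cons_of_mem _ hz))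
    rcases h y (List.mem_cons_self) with ⟨u, hu⟩ | ⟨u, hu⟩
    · refine ⟨Sum.inl u :: l', ?_⟩
      rw [List.map_cons, hl']
      congr 1
    · refine ⟨Sum.inr u :: l', ?_⟩
      rw [List.map_cons, hl']
      congr 1
      show (raagGen Γ u)⁻¹ = y
      rw [hu, inv_inv]

theorem ball_finite [Fintype V] (N : ℕ) :
    {x : Raag Γ | ∃ l : List (Raag Γ), (∀ y ∈ l, y ∈ S Γ ∨ y⁻¹ ∈ S Γ) ∧
      l.prod = x ∧ l.length ≤ N}.Finite := by
  have hfin : {l : List (V ⊕ V) | l.length ≤ N}.Finite := List.finite_length_le _ N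
  apply Set.Finite.subset (hfin.image (fun l : List (V ⊕ V) => (l.map (decode Γ)).prod))
  rintro x ⟨l, hc, hp, hlen⟩
  obtain ⟨l', hl'⟩ := encode_list Γ l hc
  refine ⟨l', ?_, by show (List.map (decode Γ) l').prod = x; rw [hl', hp]⟩
  have : l'.length = l.length := by rw [← hl', List.length_map]
  simp only [Set.mem_setOf_eq, this]
  exact hlen

theorem commute_of_mem_cyl (g : Raag Γ) (hg : g ∈ cylGroup Γ v) :
    Commute g (raagGen Γ v) := by
  refine Subgroup.closure_induction (p := fun x _ => Commute x (raagGen Γ v)) ?_ ?_ ?_ ?_ hg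
  · rintro x ⟨u, hu, rfl⟩
    rcases hu with rfl | hu
    · exact Commute.refl _
    · exact (StmtAux2.raag_rel Γ hu).symm
  · exact Commute.one_left _
  · exact fun x y _ _ hx hy => hx.mul_left hy
  · exact fun x _ hx => hx.inv_left

theorem dist_coset_eq (g : Raag Γ) (hcom : Commute g (raagGen Γ v)) (n : ℤ) :
    raagDist Γ (raagGen Γ v ^ n) (g * raagGen Γ v ^ n) = raagDist Γ 1 g := by
  show wordDist (S Γ) _ _ = wordDist (S Γ) 1 g
  have hset : {l : List (Raag Γ) | (∀ x ∈ l, x ∈ S Γ ∨ x⁻¹ ∈ S Γ) ∧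
        raagGen Γ v ^ n * l.prod = g * raagGen Γ v ^ n}
      = {l : List (Raag Γ) | (∀ x ∈ l, x ∈ S Γ ∨ x⁻¹ ∈ S Γ) ∧ 1 * l.prod = g} := by
    ext l
    simp only [Set.mem_setOf_eq, and_congr_right_iff]
    intro _
    rw [one_mul]
    constructor
    · intro h
      have h2 : raagGen Γ v ^ n * l.prod = raagGen Γ v ^ n * g := by
        rw [h, (hcom.zpow_right n).eq]
      exact mul_left_cancel h2
    · intro h
      rw [h, (hcom.zpow_right n).eq]
  rw [wordDist, wordDist, hset]

/-- The exponent-sum homomorphism at `v`. -/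
def expv : Raag Γ →* Multiplicative ℤ :=
  StmtAux2.raagLift Γ (fun u => if u = v then Multiplicative.ofAdd 1 else 1)
    (fun _ _ _ => Commute.all _ _)

theorem expv_gen_v : expv Γ v (raagGen Γ v) = Multiplicative.ofAdd 1 := by
  rw [expv, StmtAux2.raagLift_gen, if_pos rfl]

theorem expv_zpow (k : ℤ) : expv Γ v (raagGen Γ v ^ k) = Multiplicative.ofAdd k := by
  rw [map_zpow, expv_gen_v]
  apply Multiplicative.toAdd.injective
  rw [toAdd_zpow]
  simp

end Metric

end StmtAux3

/-- For a cut vertex `v`, the cosets `⟨v⟩` and `g⟨v⟩` are at finite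
Hausdorff distance in `A(Γ)` if and only if `g ∈ A(star(v))`. -/
theorem stmt4 {V : Type} [Fintype V] (Γ : SimpleGraph V) (hconn : Γ.Connected)
    (v : V) (hv : CutVertex Γ v) (g : Raag Γ) :
    FinHaus (raagDist Γ)
        {x : Raag Γ | ∃ n : ℤ, x = raagGen Γ v ^ n}
        {x : Raag Γ | ∃ n : ℤ, x = g * raagGen Γ v ^ n} ↔
      g ∈ cylGroup Γ v := by
  constructor
  · rintro ⟨r, hr0, h1, -⟩
    have hsel : ∀ n : ℤ, ∃ (m : ℤ) (l : List (Raag Γ)),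
        (∀ y ∈ l, y ∈ StmtAux3.S Γ ∨ y⁻¹ ∈ StmtAux3.S Γ) ∧
        raagGen Γ v ^ n * l.prod = g * raagGen Γ v ^ m ∧ l.length ≤ Nat.floor r := by
      intro n
      obtain ⟨t, ht, hd⟩ := h1 (raagGen Γ v ^ n) ⟨n, rfl⟩
      obtain ⟨m, rfl⟩ := ht
      obtain ⟨l, hc, hp, hlen⟩ := StmtAux3.exists_short Γ _ _ r hr0 hd
      exact ⟨m, l, hc, hp, hlen⟩
    choose m l hc hp hlen using hsel
    have hball : ∀ n : ℤ, (l n).prod ∈ {x : Raag Γ | ∃ l' : List (Raag Γ),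
        (∀ y ∈ l', y ∈ StmtAux3.S Γ ∨ y⁻¹ ∈ StmtAux3.S Γ) ∧ l'.prod = x ∧
        l'.length ≤ Nat.floor r} := fun n => ⟨l n, hc n, rfl, hlen n⟩
    haveI := (StmtAux3.ball_finite Γ (Nat.floor r)).to_subtype
    obtain ⟨n₁, n₂, hne, heqs⟩ := Finite.exists_ne_map_eq_of_infinite
      (fun n : ℤ => (⟨(l n).prod, hball n⟩ : {x : Raag Γ | ∃ l' : List (Raag Γ),
        (∀ y ∈ l', y ∈ StmtAux3.S Γ ∨ y⁻¹ ∈ StmtAux3.S Γ) ∧ l'.prod = x ∧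
        l'.length ≤ Nat.floor r}))
    have heq2 : (l n₁).prod = (l n₂).prod := congrArg Subtype.val heqs
    have w1 : (l n₁).prod = (raagGen Γ v ^ n₁)⁻¹ * (g * raagGen Γ v ^ m n₁) := by
      rw [← hp n₁, inv_mul_cancel_left]
    have w2 : (l n₂).prod = (raagGen Γ v ^ n₂)⁻¹ * (g * raagGen Γ v ^ m n₂) := by
      rw [← hp n₂, inv_mul_cancel_left]
    have heqw : (raagGen Γ v ^ n₁)⁻¹ * (g * raagGen Γ v ^ m n₁)
        = (raagGen Γ v ^ n₂)⁻¹ * (g * raagGen Γ v ^ m n₂) := by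
      rw [← w1, ← w2, heq2]
    set a : ℤ := n₁ - n₂ with hadef
    set b : ℤ := m n₁ - m n₂ with hbdef
    have hva : raagGen Γ v ^ (n₁ : ℤ) * (raagGen Γ v ^ (n₂ : ℤ))⁻¹ = raagGen Γ v ^ a := by
      rw [← zpow_neg, ← zpow_add]
      congr 1
      all_goals omega
    have hvb : raagGen Γ v ^ m n₁ * (raagGen Γ v ^ m n₂)⁻¹ = raagGen Γ v ^ b := by
      rw [← zpow_neg, ← zpow_add]
      congr 1
      all_goals omega
    have hstep : g * raagGen Γ v ^ m n₁ = raagGen Γ v ^ a * (g * raagGen Γ v ^ m n₂) := by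
      have h5 := congrArg (fun z => raagGen Γ v ^ (n₁ : ℤ) * z) heqw
      simp only [mul_inv_cancel_left] at h5
      rw [h5, ← mul_assoc, hva]
    have hconj : raagGen Γ v ^ a * g = g * raagGen Γ v ^ b := by
      have h6 := congrArg (fun z => z * (raagGen Γ v ^ m n₂)⁻¹) hstep
      rw [mul_assoc g, hvb] at h6
      rw [mul_assoc (raagGen Γ v ^ a), mul_inv_cancel_right] at h6
      exact h6.symm
    have ha : a ≠ 0 := sub_ne_zero.2 hne
    have hexp := congrArg (StmtAux3.expv Γ v) hconj
    rw [map_mul, map_mul, StmtAux3.expv_zpow, StmtAux3.expv_zpow] at hexp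
    have hab : a = b := by
      rw [mul_comm (Multiplicative.ofAdd a)] at hexp
      have h7 := mul_left_cancel hexp
      exact Multiplicative.ofAdd.injective h7
    rw [← hab] at hconj
    exact StmtAux2.mem_star_of_commute_pow Γ v g a ha hconj.symm
  · intro hg
    have hcom := StmtAux3.commute_of_mem_cyl Γ v g hg
    refine ⟨wordDist (StmtAux3.S Γ) 1 g, StmtAux3.wordDist_nonneg Γ 1 g, ?_, ?_⟩
    · rintro s ⟨n, rfl⟩
      exact ⟨g * raagGen Γ v ^ n, ⟨n, rfl⟩, le_of_eq (StmtAux3.dist_coset_eq Γ v g hcom n)⟩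
    · rintro t ⟨n, rfl⟩
      exact ⟨raagGen Γ v ^ n, ⟨n, rfl⟩, le_of_eq (StmtAux3.dist_coset_eq Γ v g hcom n)⟩

end
end

section
/- Let Γ and Λ be finite simplicial graphs, let l ⊆ A(Γ) and l' ⊆ A(Λ) be standard geodesics, and suppose there exists a based quasi-isometry f : (A(Γ),l) → (A(Λ),l'). Then l' is an 𝓡-geodesic if and only if l is an 𝓡-geodesic. -/
noncomputable section

universe u v

/-! ### Auxiliary lemmas for `stmt7` -/

section StmtSevenAux

open scoped Classical

variable {V : Type} {Γ : SimpleGraph V}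

/-- A list is "ok" if each entry is a generator or an inverse of a generator. -/
def Ok (Γ : SimpleGraph V) (L : List (Raag Γ)) : Prop :=
  ∀ x ∈ L, x ∈ Set.range (raagGen Γ) ∨ x⁻¹ ∈ Set.range (raagGen Γ)

lemma exists_ok (g : Raag Γ) : ∃ L : List (Raag Γ), Ok Γ L ∧ L.prod = g := by
  have htop : Subgroup.closure (Set.range (raagGen Γ)) = ⊤ :=
    PresentedGroup.closure_range_of (raagRels Γ)
  have hg : g ∈ (Subgroup.closure (Set.range (raagGen Γ))).toSubmonoid := by
    rw [htop]; trivial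
  rw [Subgroup.closure_toSubmonoid] at hg
  obtain ⟨L, hL, hprod⟩ := Submonoid.exists_list_of_mem_closure hg
  refine ⟨L, fun x hx => ?_, hprod⟩
  rcases hL x hx with h | h
  · exact Or.inl h
  · exact Or.inr (Set.mem_inv.mp h)

lemma raagDist_spec (g h : Raag Γ) :
    ∃ L : List (Raag Γ), Ok Γ L ∧ g * L.prod = h ∧
      raagDist Γ g h = (L.length : ℝ) ∧
      ∀ L' : List (Raag Γ), Ok Γ L' → g * L'.prod = h → L.length ≤ L'.length := by
  have hne : {L : List (Raag Γ) | Ok Γ L ∧ g * L.prod = h}.Nonempty := by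
    obtain ⟨L, hL, hp⟩ := exists_ok (g⁻¹ * h)
    exact ⟨L, hL, by rw [hp, ← mul_assoc, mul_inv_cancel, one_mul]⟩
  have hTne : (List.length '' {L : List (Raag Γ) | Ok Γ L ∧ g * L.prod = h}).Nonempty :=
    hne.image _
  obtain ⟨L, hLmem, hLlen⟩ := Nat.sInf_mem hTne
  refine ⟨L, hLmem.1, hLmem.2, ?_, ?_⟩
  · have hleast : IsLeast ((fun l : List (Raag Γ) => (l.length : ℝ)) ''
        {l : List (Raag Γ) | Ok Γ l ∧ g * l.prod = h}) (L.length : ℝ) := by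
      constructor
      · exact ⟨L, hLmem, rfl⟩
      · rintro x ⟨L', hL', rfl⟩
        have h3 : L.length ≤ L'.length := by
          rw [hLlen]; exact Nat.sInf_le ⟨L', hL', rfl⟩
        show (L.length : ℝ) ≤ (L'.length : ℝ)
        exact_mod_cast h3
    simp only [raagDist, wordDist]
    simp only [Ok] at hleast
    exact hleast.csInf_eq
  · intro L' h1 h2
    rw [hLlen]; exact Nat.sInf_le ⟨L', ⟨h1, h2⟩, rfl⟩

lemma raagDist_le_length {g h : Raag Γ} {L : List (Raag Γ)} (h1 : Ok Γ L)
    (h2 : g * L.prod = h) : raagDist Γ g h ≤ (L.length : ℝ) := by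
  obtain ⟨L0, _, _, heq, hmin⟩ := raagDist_spec g h
  rw [heq]; exact_mod_cast hmin L h1 h2

lemma raagDist_nonneg (g h : Raag Γ) : 0 ≤ raagDist Γ g h := by
  obtain ⟨L, _, _, heq, _⟩ := raagDist_spec g h
  rw [heq]; positivity

lemma raagDist_self (g : Raag Γ) : raagDist Γ g g = 0 := by
  have h1 : raagDist Γ g g ≤ ((List.nil : List (Raag Γ)).length : ℝ) :=
    raagDist_le_length (by intro x hx; simp at hx) (by simp)
  simp at h1
  exact le_antisymm h1 (raagDist_nonneg g g)

lemma raagDist_symm_le (g h : Raag Γ) : raagDist Γ h g ≤ raagDist Γ g h := by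
  obtain ⟨L, hok, hprod, heq, _⟩ := raagDist_spec g h
  have hok' : Ok Γ (L.map (fun x => x⁻¹)).reverse := by
    intro x hx
    rw [List.mem_reverse, List.mem_map] at hx
    obtain ⟨y, hy, rfl⟩ := hx
    rcases hok y hy with h1 | h1
    · right; rwa [inv_inv]
    · left; exact h1
  have hprod' : h * ((L.map (fun x => x⁻¹)).reverse).prod = g := by
    rw [← List.prod_inv_reverse, ← hprod]
    rw [mul_assoc, mul_inv_cancel, mul_one]
  have := raagDist_le_length hok' hprod'
  simpa [heq] using this

lemma raagDist_symm (g h : Raag Γ) : raagDist Γ g h = raagDist Γ h g :=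
  le_antisymm (raagDist_symm_le h g) (raagDist_symm_le g h)

lemma raagDist_triangle (g h k : Raag Γ) :
    raagDist Γ g k ≤ raagDist Γ g h + raagDist Γ h k := by
  obtain ⟨L1, hok1, hprod1, heq1, _⟩ := raagDist_spec g h
  obtain ⟨L2, hok2, hprod2, heq2, _⟩ := raagDist_spec h k
  have hok : Ok Γ (L1 ++ L2) := by
    intro x hx; rw [List.mem_append] at hx
    rcases hx with hx | hx
    · exact hok1 x hx
    · exact hok2 x hx
  have hprod : g * (L1 ++ L2).prod = k := by
    rw [List.prod_append, ← mul_assoc, hprod1, hprod2]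
  have := raagDist_le_length hok hprod
  rw [heq1, heq2]
  simpa using this

lemma param_mul (l : StdGeod Γ) (a k : ℤ) :
    l.param a * raagGen Γ l.label ^ k = l.param (a + k) := by
  simp only [StdGeod.param]
  rw [mul_assoc, ← zpow_add]

lemma raagDist_param_le (l : StdGeod Γ) (a b : ℤ) :
    raagDist Γ (l.param a) (l.param b) ≤ |(b : ℝ) - (a : ℝ)| := by
  set c := raagGen Γ l.label with hc
  have key : ∀ k : ℤ, ∃ L : List (Raag Γ), Ok Γ L ∧ L.prod = c ^ k ∧ L.length = k.natAbs := by
    intro k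
    rcases le_or_gt 0 k with hk | hk
    · refine ⟨List.replicate k.toNat c, ?_, ?_, ?_⟩
      · intro x hx
        rw [List.mem_replicate] at hx
        rw [hx.2]; exact Or.inl ⟨l.label, rfl⟩
      · rw [List.prod_replicate]
        rw [← zpow_natCast, Int.toNat_of_nonneg hk]
      · simp only [List.length_replicate]; omega
    · refine ⟨List.replicate (-k).toNat c⁻¹, ?_, ?_, ?_⟩
      · intro x hx
        rw [List.mem_replicate] at hx
        rw [hx.2, inv_inv]; exact Or.inr ⟨l.label, rfl⟩
      · rw [List.prod_replicate, inv_pow, ← zpow_natCast,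
          Int.toNat_of_nonneg (by omega : (0:ℤ) ≤ -k), ← zpow_neg, neg_neg]
      · simp only [List.length_replicate]
        omega
  obtain ⟨L, hok, hprod, hlen⟩ := key (b - a)
  have hw : l.param a * L.prod = l.param b := by
    rw [hprod, param_mul]
    congr 1; omega
  have := raagDist_le_length hok hw
  rw [hlen] at this
  refine this.trans ?_
  have h1 : ((b - a).natAbs : ℝ) = |(b : ℝ) - (a : ℝ)| := by
    rw [Nat.cast_natAbs, Int.cast_abs]
    push_cast
    ring_nf
  rw [h1]

/-- The homomorphism `A(Γ) → ℤ` counting occurrences of the generator `v`. -/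
def labelHom (Γ : SimpleGraph V) (v : V) : Raag Γ →* Multiplicative ℤ :=
  PresentedGroup.toGroup (f := fun u => Multiplicative.ofAdd (if u = v then (1:ℤ) else 0))
    (by
      rintro r ⟨x, y, hxy, rfl⟩
      have hcomm : ∀ a b : Multiplicative ℤ, a * b * a⁻¹ * b⁻¹ = 1 := by
        intro a b; rw [mul_comm a b]; group
      simp only [map_mul, map_inv, FreeGroup.lift_apply_of]
      exact hcomm _ _)

lemma labelHom_gen (v u : V) :
    labelHom Γ v (raagGen Γ u) = Multiplicative.ofAdd (if u = v then (1:ℤ) else 0) :=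
  PresentedGroup.toGroup.of _

lemma labelHom_bound (v : V) (L : List (Raag Γ)) (hok : Ok Γ L) :
    |Multiplicative.toAdd (labelHom Γ v L.prod)| ≤ (L.length : ℤ) := by
  induction L with
  | nil => simp
  | cons x L ih =>
    have hx : |Multiplicative.toAdd (labelHom Γ v x)| ≤ 1 := by
      rcases hok x List.mem_cons_self with ⟨u, hu⟩ | ⟨u, hu⟩
      · rw [← hu, labelHom_gen]
        split <;> simp
      · have : x = (raagGen Γ u)⁻¹ := by rw [hu, inv_inv]
        rw [this, map_inv, labelHom_gen]
        split <;> simp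
    have hL : |Multiplicative.toAdd (labelHom Γ v L.prod)| ≤ (L.length : ℤ) :=
      ih (fun y hy => hok y (List.mem_cons_of_mem x hy))
    rw [List.prod_cons, map_mul, toAdd_mul]
    calc |Multiplicative.toAdd (labelHom Γ v x) + Multiplicative.toAdd (labelHom Γ v L.prod)|
        ≤ _ + _ := abs_add_le _ _
      _ ≤ 1 + (L.length : ℤ) := add_le_add hx hL
      _ = ((x :: L).length : ℤ) := by simp [add_comm]

lemma labelHom_zpow (v : V) (k : ℤ) :
    labelHom Γ v (raagGen Γ v ^ k) = Multiplicative.ofAdd k := by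
  rw [map_zpow, labelHom_gen]
  simp only [if_pos rfl]
  rw [← ofAdd_zsmul]
  simp

lemma raagDist_param_ge (l : StdGeod Γ) (a b : ℤ) :
    |(b : ℝ) - (a : ℝ)| ≤ raagDist Γ (l.param a) (l.param b) := by
  obtain ⟨L, hok, hprod, heq, _⟩ := raagDist_spec (l.param a) (l.param b)
  have hp : L.prod = raagGen Γ l.label ^ (b - a) := by
    have h2 : l.param a * raagGen Γ l.label ^ (b - a) = l.param b := by
      rw [param_mul]; congr 1; omega
    exact mul_left_cancel (hprod.trans h2.symm)
  have hb := labelHom_bound l.label L hok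
  rw [hp, labelHom_zpow, toAdd_ofAdd] at hb
  rw [heq]
  have : ((|b - a| : ℤ) : ℝ) ≤ ((L.length : ℤ) : ℝ) := by exact_mod_cast hb
  rw [Int.cast_abs] at this
  push_cast at this ⊢
  linarith [this]

variable {V1 V2 V3 : Type} {Γ1 : SimpleGraph V1} {Γ2 : SimpleGraph V2} {Γ3 : SimpleGraph V3}

lemma isQIWith_comp {f : Raag Γ1 → Raag Γ2} {g : Raag Γ2 → Raag Γ3}
    {K1 A1 K2 A2 : ℝ}
    (hf : IsQIWith K1 A1 (raagDist Γ1) (raagDist Γ2) f)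
    (hg : IsQIWith K2 A2 (raagDist Γ2) (raagDist Γ3) g) :
    IsQIWith (K1 * K2) (K2 * A1 + 2 * A2 + A1)
      (raagDist Γ1) (raagDist Γ3) (fun x => g (f x)) := by
  obtain ⟨hK1, hA1, hf2, hf3⟩ := hf
  obtain ⟨hK2, hA2, hg2, hg3⟩ := hg
  have hK1' : (0:ℝ) < K1 := lt_of_lt_of_le zero_lt_one hK1
  have hK2' : (0:ℝ) < K2 := lt_of_lt_of_le zero_lt_one hK2
  have hK12 : (0:ℝ) < K1 * K2 := mul_pos hK1' hK2'
  have hK2A1 : (0:ℝ) ≤ K2 * A1 := mul_nonneg hK2'.le hA1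
  refine ⟨by nlinarith, by linarith, fun x x' => ⟨?_, ?_⟩, ?_⟩
  · show raagDist Γ1 x x' / (K1 * K2) - (K2 * A1 + 2 * A2 + A1) ≤
      raagDist Γ3 (g (f x)) (g (f x'))
    have h1 : raagDist Γ1 x x' ≤ (raagDist Γ2 (f x) (f x') + A1) * K1 := by
      rw [← div_le_iff₀ hK1']
      have := (hf2 x x').1; linarith
    have h2 : raagDist Γ2 (f x) (f x') ≤
        (raagDist Γ3 (g (f x)) (g (f x')) + A2) * K2 := by
      rw [← div_le_iff₀ hK2']
      have := (hg2 (f x) (f x')).1; linarith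
    rw [sub_le_iff_le_add, div_le_iff₀ hK12]
    have hd3 : 0 ≤ raagDist Γ3 (g (f x)) (g (f x')) := raagDist_nonneg _ _
    have h3 : raagDist Γ1 x x' ≤
        K1 * K2 * raagDist Γ3 (g (f x)) (g (f x')) + K1 * K2 * A2 + K1 * A1 := by
      nlinarith [mul_le_mul_of_nonneg_left h2 hK1'.le]
    have hK2sq : (1:ℝ) ≤ K2 * K2 := by nlinarith
    have e1 : (0:ℝ) ≤ K1 * A1 * (K2 * K2 - 1) :=
      mul_nonneg (mul_nonneg hK1'.le hA1) (by linarith)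
    have e3 : (0:ℝ) ≤ K1 * K2 * A2 := mul_nonneg hK12.le hA2
    have e4 : (0:ℝ) ≤ K1 * K2 * A1 := mul_nonneg hK12.le hA1
    nlinarith [h3, e1, e3, e4]
  · show raagDist Γ3 (g (f x)) (g (f x')) ≤
      K1 * K2 * raagDist Γ1 x x' + (K2 * A1 + 2 * A2 + A1)
    have h1 := (hf2 x x').2
    have h2 := (hg2 (f x) (f x')).2
    have hd1 : 0 ≤ raagDist Γ1 x x' := raagDist_nonneg _ _
    nlinarith [mul_le_mul_of_nonneg_left h1 hK2'.le]
  · intro z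
    obtain ⟨y, hy⟩ := hg3 z
    obtain ⟨x, hx⟩ := hf3 y
    refine ⟨x, ?_⟩
    show raagDist Γ3 (g (f x)) z ≤ K2 * A1 + 2 * A2 + A1
    have h1 : raagDist Γ3 (g (f x)) (g y) ≤ K2 * raagDist Γ2 (f x) y + A2 :=
      (hg2 (f x) y).2
    have h2 : raagDist Γ3 (g (f x)) z ≤
        raagDist Γ3 (g (f x)) (g y) + raagDist Γ3 (g y) z := raagDist_triangle _ _ _
    have h3 := mul_le_mul_of_nonneg_left hx hK2'.le
    linarith

lemma finHaus_trans {S T U : Set (Raag Γ1)}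
    (h1 : FinHaus (raagDist Γ1) S T) (h2 : FinHaus (raagDist Γ1) T U) :
    FinHaus (raagDist Γ1) S U := by
  obtain ⟨r1, hr1, h1a, h1b⟩ := h1
  obtain ⟨r2, hr2, h2a, h2b⟩ := h2
  refine ⟨r1 + r2, by linarith, fun s hs => ?_, fun u hu => ?_⟩
  · obtain ⟨t, ht, hd⟩ := h1a s hs
    obtain ⟨u, hu, hd'⟩ := h2a t ht
    exact ⟨u, hu, (raagDist_triangle s t u).trans (by linarith)⟩
  · obtain ⟨t, ht, hd'⟩ := h2b u hu
    obtain ⟨s, hs, hd⟩ := h1b t ht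
    exact ⟨s, hs, (raagDist_triangle s t u).trans (by linarith)⟩

lemma finHaus_image {g : Raag Γ2 → Raag Γ3} {K A : ℝ}
    (hg : IsQIWith K A (raagDist Γ2) (raagDist Γ3) g)
    {S T : Set (Raag Γ2)} (h : FinHaus (raagDist Γ2) S T) :
    FinHaus (raagDist Γ3) (g '' S) (g '' T) := by
  obtain ⟨hK, hA, hg2, _⟩ := hg
  obtain ⟨r, hr, ha, hb⟩ := h
  have hK0 : (0:ℝ) ≤ K := by linarith
  refine ⟨K * r + A, by positivity, ?_, ?_⟩
  · rintro s ⟨x, hx, rfl⟩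
    obtain ⟨t, ht, hd⟩ := ha x hx
    refine ⟨g t, ⟨t, ht, rfl⟩, ?_⟩
    have := (hg2 x t).2
    nlinarith
  · rintro t ⟨y, hy, rfl⟩
    obtain ⟨s, hs, hd⟩ := hb y hy
    refine ⟨g s, ⟨s, hs, rfl⟩, ?_⟩
    have := (hg2 s y).2
    nlinarith

lemma isBasedQI_comp {f : Raag Γ1 → Raag Γ2} {g : Raag Γ2 → Raag Γ3}
    {l1 : StdGeod Γ1} {l2 : StdGeod Γ2} {l3 : StdGeod Γ3}
    (hf : IsBasedQI f l1 l2) (hg : IsBasedQI g l2 l3) :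
    IsBasedQI (fun x => g (f x)) l1 l3 := by
  obtain ⟨⟨K1, A1, hf1⟩, hf2⟩ := hf
  obtain ⟨⟨K2, A2, hg1⟩, hg2⟩ := hg
  refine ⟨⟨_, _, isQIWith_comp hf1 hg1⟩, ?_⟩
  have himg : (fun x => g (f x)) '' l1.carrier = g '' (f '' l1.carrier) := by
    rw [Set.image_image]
  rw [himg]
  exact finHaus_trans (finHaus_image hg1 hf2) hg2

lemma inverse_basedQI {f : Raag Γ1 → Raag Γ2} {l1 : StdGeod Γ1} {l2 : StdGeod Γ2}
    (hf : IsBasedQI f l1 l2) : ∃ fb : Raag Γ2 → Raag Γ1, IsBasedQI fb l2 l1 := by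
  obtain ⟨⟨K, A, hK, hA, hqi, hsur⟩, r, hr0, hHa, hHb⟩ := hf
  have hK' : (0:ℝ) < K := lt_of_lt_of_le zero_lt_one hK
  choose fb hfb using hsur
  have hfb' : ∀ y, raagDist Γ2 y (f (fb y)) ≤ A := by
    intro y; rw [raagDist_symm]; exact hfb y
  -- basic bound: if d(f u, y) small then d(u, fb y) controlled
  have key : ∀ (u : Raag Γ1) (y : Raag Γ2) (c : ℝ),
      raagDist Γ2 (f u) y ≤ c → raagDist Γ1 (fb y) u ≤ K * (c + 2 * A) := by
    intro u y c hc
    have h1 : raagDist Γ2 (f (fb y)) (f u) ≤ A + c := by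
      have t1 := raagDist_triangle (f (fb y)) y (f u)
      have t2 : raagDist Γ2 y (f u) = raagDist Γ2 (f u) y := raagDist_symm _ _
      have t3 := hfb y
      linarith
    have h2 := (hqi (fb y) u).1
    have h3 : raagDist Γ1 (fb y) u ≤ (A + c + A) * K := by
      rw [← div_le_iff₀ hK']; linarith
    nlinarith
  set A' : ℝ := K * (3 * A + r + 2) + 3 * A + 2 with hA'
  have hA'0 : 0 ≤ A' := by nlinarith
  refine ⟨fb, ⟨K, A', hK, hA'0, fun y y' => ⟨?_, ?_⟩, fun x => ⟨f x, ?_⟩⟩,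
    K * (r + 2 * A), by nlinarith, ?_, ?_⟩
  · -- lower bound for fb
    have h1 : raagDist Γ2 y y' ≤ raagDist Γ2 y (f (fb y)) +
        raagDist Γ2 (f (fb y)) (f (fb y')) + raagDist Γ2 (f (fb y')) y' := by
      have t1 := raagDist_triangle y (f (fb y)) y'
      have t2 := raagDist_triangle (f (fb y)) (f (fb y')) y'
      linarith
    have h2 := (hqi (fb y) (fb y')).2
    have h3 := hfb' y
    have h4 := hfb y'
    -- d2(y,y') ≤ A + (K d1 + A) + A
    rw [sub_le_iff_le_add, div_le_iff₀ hK']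
    have hd : 0 ≤ raagDist Γ1 (fb y) (fb y') := raagDist_nonneg _ _
    nlinarith
  · -- upper bound for fb
    have h1 : raagDist Γ2 (f (fb y)) y' ≤ A + raagDist Γ2 y y' := by
      have t1 := raagDist_triangle (f (fb y)) y y'
      have t2 := hfb y
      linarith
    have h2 := key (fb y') (f (fb y')) 0 (by rw [raagDist_self])
    -- use key with u := fb y', y := y' ... instead direct:
    have h3 : raagDist Γ2 (f (fb y)) (f (fb y')) ≤ A + raagDist Γ2 y y' + A := by
      have t1 := raagDist_triangle (f (fb y)) y' (f (fb y'))
      have t2 := hfb' y'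
      linarith
    have h4 := (hqi (fb y) (fb y')).1
    have h5 : raagDist Γ1 (fb y) (fb y') ≤ (A + raagDist Γ2 y y' + A + A) * K := by
      rw [← div_le_iff₀ hK']; linarith
    have hd : 0 ≤ raagDist Γ2 y y' := raagDist_nonneg _ _
    nlinarith
  · -- coboundedness of fb
    have h1 := key x (f x) 0 (by rw [raagDist_self])
    nlinarith
  · -- Hausdorff: fb '' l2.carrier within l1.carrier
    rintro s ⟨y, hy, rfl⟩
    obtain ⟨p, ⟨x, hx, rfl⟩, hd⟩ := hHb y hy
    refine ⟨x, hx, ?_⟩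
    exact key x y r hd
  · -- l1.carrier within fb '' l2.carrier
    intro x hx
    obtain ⟨y, hy, hd⟩ := hHa (f x) ⟨x, hx, rfl⟩
    exact ⟨fb y, ⟨y, hy, rfl⟩, key x y r hd⟩

lemma hasStr_ne_zero {f : Raag Γ1 → Raag Γ2} {l1 : StdGeod Γ1} {l2 : StdGeod Γ2}
    (hqi : IsQI (raagDist Γ1) (raagDist Γ2) f) {s : ℚ}
    (hs : HasStr f l1 l2 s) : s ≠ 0 := by
  rintro rfl
  obtain ⟨C, hC0, ε, hε, b, hb⟩ := hs
  obtain ⟨K, A, hK, hA, hqi2, _⟩ := hqi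
  have hK' : (0:ℝ) < K := lt_of_lt_of_le zero_lt_one hK
  have hb' : ∀ n : ℤ, raagDist Γ2 (f (l1.param n)) (l2.param b) ≤ C := by
    intro n
    have := hb n
    simpa using this
  set n : ℤ := ⌈K * (2 * C + A)⌉ + 1 with hn
  have hn1 : K * (2 * C + A) < (n : ℝ) := by
    rw [hn]; push_cast
    linarith [Int.le_ceil (K * (2 * C + A))]
  have hn0 : 0 < n := by
    rw [hn]
    have h0 : (0:ℝ) ≤ K * (2 * C + A) := by nlinarith
    have h1 : 0 ≤ ⌈K * (2 * C + A)⌉ := Int.ceil_nonneg h0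
    omega
  have hd2 : raagDist Γ2 (f (l1.param 0)) (f (l1.param n)) ≤ 2 * C := by
    have t1 := raagDist_triangle (f (l1.param 0)) (l2.param b) (f (l1.param n))
    have t2 : raagDist Γ2 (l2.param b) (f (l1.param n)) =
        raagDist Γ2 (f (l1.param n)) (l2.param b) := raagDist_symm _ _
    have := hb' 0
    have := hb' n
    linarith
  have hd1 : (n : ℝ) ≤ raagDist Γ1 (l1.param 0) (l1.param n) := by
    have := raagDist_param_ge l1 0 n
    have habs : |(n:ℝ) - (0:ℤ)| = (n:ℝ) := by
      rw [Int.cast_zero, sub_zero, abs_of_nonneg (by exact_mod_cast hn0.le)]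
    rw [habs] at this
    exact this
  have hlow := (hqi2 (l1.param 0) (l1.param n)).1
  rw [sub_le_iff_le_add, div_le_iff₀ hK'] at hlow
  nlinarith

lemma floor_err (x : ℚ) : |((⌊x⌋ : ℚ)) - x| ≤ 1 := by
  rw [abs_le]
  constructor
  · linarith [Int.sub_one_lt_floor x]
  · linarith [Int.floor_le x]

lemma transfer {l1 : StdGeod Γ1} {l2 : StdGeod Γ2} {l3 : StdGeod Γ3}
    {F : Raag Γ1 → Raag Γ2} {G : Raag Γ2 → Raag Γ3} {K A : ℝ}
    (hG : IsQIWith K A (raagDist Γ2) (raagDist Γ3) G)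
    {s r : ℚ} (hs : s ≠ 0)
    (hF : HasStr F l1 l2 s) (hGF : HasStr (fun x => G (F x)) l1 l3 r) :
    HasStr G l2 l3 (r / s) := by
  obtain ⟨C1, hC1, ε1, hε1, b1, hb1⟩ := hF
  obtain ⟨C2, hC2, ε2, hε2, b2, hb2⟩ := hGF
  obtain ⟨hK, hA, hG2, _⟩ := hG
  have hK' : (0:ℝ) < K := lt_of_lt_of_le zero_lt_one hK
  have habs1 : |(ε1:ℚ)| = 1 := by rcases hε1 with rfl | rfl <;> norm_num
  have habs2 : |(ε2:ℚ)| = 1 := by rcases hε2 with rfl | rfl <;> norm_num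
  have hε1sq : (ε1:ℚ) * ε1 = 1 := by rcases hε1 with rfl | rfl <;> norm_num
  set q : ℚ := r / s with hq
  set β : ℚ := ((ε1 * ε2 : ℤ) : ℚ) * q * (b1 : ℚ) with hβ
  set b'' : ℤ := b2 - ⌊β⌋ with hb''
  set D1 : ℝ := ((|s| + 1 : ℚ) : ℝ) with hD1
  set D2 : ℝ := ((|r| + 3 : ℚ) : ℝ) with hD2
  have hD1' : (0:ℝ) ≤ D1 := by
    rw [hD1]
    have : (0:ℚ) ≤ |s| + 1 := by positivity
    exact_mod_cast this
  have hD2' : (0:ℝ) ≤ D2 := by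
    rw [hD2]
    have : (0:ℚ) ≤ |r| + 3 := by positivity
    exact_mod_cast this
  refine ⟨K * D1 + A + (K * C1 + A) + C2 + D2, ?_, ε1 * ε2, ?_, b'', fun m => ?_⟩
  · nlinarith [mul_nonneg hK'.le hD1', mul_nonneg hK'.le hC1]
  · rcases hε1 with rfl | rfl <;> rcases hε2 with rfl | rfl <;> norm_num
  -- main estimate for a given m
  set t : ℚ := (ε1 : ℚ) * ((m : ℚ) - (b1 : ℚ)) / s with ht
  set n : ℤ := ⌊t⌋ with hn
  set i1 : ℤ := ε1 * ⌊s * (n:ℚ)⌋ + b1 with hi1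
  set i3 : ℤ := ε2 * ⌊r * (n:ℚ)⌋ + b2 with hi3
  set j : ℤ := ε1 * ε2 * ⌊q * (m:ℚ)⌋ + b'' with hj
  have hnt : |(n:ℚ) - t| ≤ 1 := floor_err t
  have hst : (ε1:ℚ) * (s * t) = (m:ℚ) - b1 := by
    rw [ht]
    field_simp
    linear_combination ((m:ℚ) - (b1:ℚ)) * hε1sq
  -- Claim A
  have hA1 : ((i1 : ℚ) - (m : ℚ)) =
      (ε1:ℚ) * ((⌊s * (n:ℚ)⌋ : ℚ) - s * n) + (ε1:ℚ) * s * ((n:ℚ) - t) := by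
    rw [hi1]
    push_cast
    linear_combination hst
  have hA2 : |((i1 : ℚ) - (m : ℚ))| ≤ |s| + 1 := by
    rw [hA1]
    refine (abs_add_le _ _).trans ?_
    rw [abs_mul, abs_mul, abs_mul, habs1]
    have e1 := floor_err (s * (n:ℚ))
    have e2 : |s| * |(n:ℚ) - t| ≤ |s| * 1 := mul_le_mul_of_nonneg_left hnt (abs_nonneg s)
    linarith
  -- Claim B
  have hB1 : ((i3:ℚ) - (j:ℚ)) =
      (ε2:ℚ) * ((⌊r * (n:ℚ)⌋:ℚ) - r * n) + (ε2:ℚ) * r * ((n:ℚ) - t)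
      - ((ε1:ℚ) * (ε2:ℚ)) * ((⌊q * (m:ℚ)⌋:ℚ) - q * m) + ((⌊β⌋:ℚ) - β) := by
    rw [hi3, hj, hb'']
    push_cast
    rw [hβ, ht, hq]
    field_simp
    push_cast
    ring
  have hB2 : |((i3:ℚ) - (j:ℚ))| ≤ |r| + 3 := by
    rw [hB1]
    have e1 := floor_err (r * (n:ℚ))
    have e2 := floor_err (q * (m:ℚ))
    have e3 := floor_err β
    have e4 : |(ε2:ℚ) * r * ((n:ℚ) - t)| ≤ |r| := by
      rw [abs_mul, abs_mul, habs2, one_mul]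
      have := mul_le_mul_of_nonneg_left hnt (abs_nonneg r)
      linarith
    calc |(ε2:ℚ) * ((⌊r * (n:ℚ)⌋:ℚ) - r * n) + (ε2:ℚ) * r * ((n:ℚ) - t)
          - ((ε1:ℚ) * (ε2:ℚ)) * ((⌊q * (m:ℚ)⌋:ℚ) - q * m) + ((⌊β⌋:ℚ) - β)|
        ≤ |(ε2:ℚ) * ((⌊r * (n:ℚ)⌋:ℚ) - r * n) + (ε2:ℚ) * r * ((n:ℚ) - t)
          - ((ε1:ℚ) * (ε2:ℚ)) * ((⌊q * (m:ℚ)⌋:ℚ) - q * m)| + |(⌊β⌋:ℚ) - β| :=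
          abs_add_le _ _
      _ ≤ (|(ε2:ℚ) * ((⌊r * (n:ℚ)⌋:ℚ) - r * n) + (ε2:ℚ) * r * ((n:ℚ) - t)|
          + |((ε1:ℚ) * (ε2:ℚ)) * ((⌊q * (m:ℚ)⌋:ℚ) - q * m)|) + |(⌊β⌋:ℚ) - β| := by
          have := abs_sub ((ε2:ℚ) * ((⌊r * (n:ℚ)⌋:ℚ) - r * n) + (ε2:ℚ) * r * ((n:ℚ) - t))
            (((ε1:ℚ) * (ε2:ℚ)) * ((⌊q * (m:ℚ)⌋:ℚ) - q * m))
          linarith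
      _ ≤ ((|(ε2:ℚ) * ((⌊r * (n:ℚ)⌋:ℚ) - r * n)| + |(ε2:ℚ) * r * ((n:ℚ) - t)|)
          + |((ε1:ℚ) * (ε2:ℚ)) * ((⌊q * (m:ℚ)⌋:ℚ) - q * m)|) + |(⌊β⌋:ℚ) - β| := by
          have := abs_add_le ((ε2:ℚ) * ((⌊r * (n:ℚ)⌋:ℚ) - r * n)) ((ε2:ℚ) * r * ((n:ℚ) - t))
          linarith
      _ ≤ |r| + 3 := by
          simp only [abs_mul, habs1, habs2]
          have e5 : |r| * |(n:ℚ) - t| ≤ |r| * 1 :=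
            mul_le_mul_of_nonneg_left hnt (abs_nonneg r)
          linarith
  -- distance bounds
  have hd_m_i1 : raagDist Γ2 (l2.param m) (l2.param i1) ≤ D1 := by
    refine (raagDist_param_le l2 m i1).trans ?_
    rw [hD1]
    exact_mod_cast hA2
  have T1 : raagDist Γ3 (G (l2.param m)) (G (l2.param i1)) ≤ K * D1 + A := by
    have h1 := (hG2 (l2.param m) (l2.param i1)).2
    nlinarith
  have hFm := hb1 n
  rw [← hi1] at hFm
  have T2 : raagDist Γ3 (G (l2.param i1)) (G (F (l1.param n))) ≤ K * C1 + A := by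
    have h1 := (hG2 (l2.param i1) (F (l1.param n))).2
    have h2 : raagDist Γ2 (l2.param i1) (F (l1.param n)) ≤ C1 := by
      rw [raagDist_symm]; exact hFm
    nlinarith
  have T3 : raagDist Γ3 (G (F (l1.param n))) (l3.param i3) ≤ C2 := by
    have h1 := hb2 n
    dsimp only at h1
    rwa [← hi3] at h1
  have T4 : raagDist Γ3 (l3.param i3) (l3.param j) ≤ D2 := by
    refine (raagDist_param_le l3 i3 j).trans ?_
    rw [hD2]
    have : |((j:ℚ) - (i3:ℚ))| ≤ |r| + 3 := by rw [abs_sub_comm]; exact hB2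
    exact_mod_cast this
  have tri1 := raagDist_triangle (G (l2.param m)) (G (l2.param i1)) (l3.param j)
  have tri2 := raagDist_triangle (G (l2.param i1)) (G (F (l1.param n))) (l3.param j)
  have tri3 := raagDist_triangle (G (F (l1.param n))) (l3.param i3) (l3.param j)
  linarith

end StmtSevenAux

/-- If there is a based quasi-isometry `(A(Γ), l) → (A(Λ), l')`,
then `l'` is an `𝓡`-geodesic if and only if `l` is. -/
theorem stmt7 {V W : Type} [Fintype V] [Fintype W]
    (Γ : SimpleGraph V) (Λ : SimpleGraph W)
    (l : StdGeod Γ) (l' : StdGeod Λ) (f : Raag Γ → Raag Λ)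
    (hf : IsBasedQI f l l') :
    (IsRGeod l' ↔ IsRGeod l) := by
  constructor
  · -- `l'` is an `𝓡`-geodesic → `l` is
    intro hRl'
    obtain ⟨fb, hfb⟩ := inverse_basedQI hf
    intro W2 _ Λ2 l2 g h hg hh
    have hgf := isBasedQI_comp hfb hg
    have hhf := isBasedQI_comp hfb hh
    obtain ⟨r, hr1, hr2⟩ := hRl' W2 Λ2 l2 _ _ hgf hhf
    obtain ⟨s, hs1, -⟩ := hRl' V Γ l fb fb hfb hfb
    have hs0 : s ≠ 0 := hasStr_ne_zero hfb.1 hs1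
    obtain ⟨Kg, Ag, hKg⟩ := hg.1
    obtain ⟨Kh, Ah, hKh⟩ := hh.1
    exact ⟨r / s, transfer hKg hs0 hs1 hr1, transfer hKh hs0 hs1 hr2⟩
  · -- `l` is an `𝓡`-geodesic → `l'` is
    intro hRl
    intro W2 _ Λ2 l2 g h hg hh
    have hgf := isBasedQI_comp hf hg
    have hhf := isBasedQI_comp hf hh
    obtain ⟨r, hr1, hr2⟩ := hRl W2 Λ2 l2 _ _ hgf hhf
    obtain ⟨s, hs1, -⟩ := hRl W Λ l' f f hf hf
    have hs0 : s ≠ 0 := hasStr_ne_zero hf.1 hs1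
    obtain ⟨Kg, Ag, hKg⟩ := hg.1
    obtain ⟨Kh, Ah, hKh⟩ := hh.1
    exact ⟨r / s, transfer hKg hs0 hs1 hr1, transfer hKh hs0 hs1 hr2⟩

end
end

section
/- Let X and Y be geodesic metric spaces, let K ≥ 1, A ≥ 0, and let B be a nonzero real number. Suppose γ : X → ℝ is (K,A)-coarse Lipschitz and ψ : X → Y is a (K,A)-quasi-isometry. Then the map φ : ℝ × X → ℝ × Y defined by φ(t,x) = (B·t + γ(x), ψ(x)) is a (K',A')-quasi-isometry, where K' and A' depend only on K, A and B. -/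
noncomputable section

universe u v

/-- `X` is a geodesic metric space. -/
def IsGeodesicSpace (X : Type*) [MetricSpace X] : Prop :=
  ∀ x y : X, ∃ γ : ℝ → X, γ 0 = x ∧ γ (dist x y) = y ∧
    ∀ s ∈ Set.Icc (0 : ℝ) (dist x y), ∀ t ∈ Set.Icc (0 : ℝ) (dist x y),
      dist (γ s) (γ t) = |s - t|

/-- The `ℓ²`-product distance on `ℝ × X`. -/
def prodDist {X : Type*} (d : X → X → ℝ) : (ℝ × X) → (ℝ × X) → ℝ :=
  fun p q => Real.sqrt (|p.1 - q.1| ^ 2 + d p.2 q.2 ^ 2)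

lemma aux_left (a b : ℝ) : |a| ≤ Real.sqrt (|a| ^ 2 + b ^ 2) := by
  have h := Real.sq_sqrt (show (0:ℝ) ≤ |a| ^ 2 + b ^ 2 by positivity)
  have h2 := Real.sqrt_nonneg (|a| ^ 2 + b ^ 2)
  nlinarith [abs_nonneg a, sq_nonneg b]

lemma aux_right (a b : ℝ) (hb : 0 ≤ b) : b ≤ Real.sqrt (|a| ^ 2 + b ^ 2) := by
  have h := Real.sq_sqrt (show (0:ℝ) ≤ |a| ^ 2 + b ^ 2 by positivity)
  have h2 := Real.sqrt_nonneg (|a| ^ 2 + b ^ 2)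
  nlinarith [abs_nonneg a, sq_nonneg (|a|)]

lemma aux_add (a b : ℝ) (hb : 0 ≤ b) : Real.sqrt (|a| ^ 2 + b ^ 2) ≤ |a| + b := by
  have h1 : |a| ^ 2 + b ^ 2 ≤ (|a| + b) ^ 2 := by nlinarith [abs_nonneg a]
  calc Real.sqrt (|a| ^ 2 + b ^ 2) ≤ Real.sqrt ((|a| + b) ^ 2) := Real.sqrt_le_sqrt h1
    _ = |a| + b := Real.sqrt_sq (by positivity)

/-- Pure-arithmetic lower bound. -/
lemma arith_lower (K A b K' A' Δt Δ s S : ℝ)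
    (hKpos : 0 < K) (hA : 0 ≤ A) (hb : 0 < b) (hK'1 : 1 ≤ K') (hA'0 : 0 ≤ A')
    (hS0 : 0 ≤ S)
    (hsle : s ≤ Δt + Δ) (hΔS : Δ ≤ K * S + K * A) (hΔtS : b * Δt ≤ S + K * Δ + A)
    (hK'B : 1 + K ^ 2 + K * b ≤ K' * b)
    (hA'B : (K ^ 2 + 1) * A + K * A * b ≤ A' * b) :
    s / K' - A' ≤ S := by
  have hK'pos : (0:ℝ) < K' := lt_of_lt_of_le one_pos hK'1
  have e2 : b * Δ ≤ b * (K * S + K * A) := mul_le_mul_of_nonneg_left hΔS hb.le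
  have e3 : K * Δ ≤ K * (K * S + K * A) := mul_le_mul_of_nonneg_left hΔS hKpos.le
  have e4 : b * s ≤ b * (Δt + Δ) := mul_le_mul_of_nonneg_left hsle hb.le
  have hBs : b * s ≤ (1 + K ^ 2 + K * b) * S + (K ^ 2 + 1 + K * b) * A := by nlinarith
  have h6 : (1 + K ^ 2 + K * b) * S ≤ K' * b * S := mul_le_mul_of_nonneg_right hK'B hS0
  have h7 : (K ^ 2 + 1 + K * b) * A ≤ A' * b := by nlinarith
  have h8 : b * s ≤ b * (K' * S + A') := by nlinarith
  have h9 : s ≤ K' * S + A' := le_of_mul_le_mul_left h8 hb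
  rw [sub_le_iff_le_add, div_le_iff₀ hK'pos]
  nlinarith [h9, mul_le_mul_of_nonneg_left hK'1 hA'0]

/-- Pure-arithmetic upper bound. -/
lemma arith_upper (K A b K' A' Δt Δ s S : ℝ)
    (hKpos : 0 < K) (hb : 0 ≤ b) (hs0 : 0 ≤ s)
    (hts : Δt ≤ s) (hds : Δ ≤ s)
    (hSle : S ≤ b * Δt + 2 * K * Δ + 2 * A)
    (hup : b + 2 * K ≤ K') (hupA : 2 * A ≤ A') :
    S ≤ K' * s + A' := by
  have h2 : S ≤ (b + 2 * K) * s + 2 * A := by nlinarith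
  have h3 : (b + 2 * K) * s ≤ K' * s := mul_le_mul_of_nonneg_right hup hs0
  linarith

/-- Main auxiliary lemma with abstract `K'`, `A'` subject to arithmetic side conditions. -/
lemma stmt16_aux (K A B K' A' : ℝ) (hK : 1 ≤ K) (hA : 0 ≤ A) (hB : B ≠ 0)
    (hK'1 : 1 ≤ K') (hA'0 : 0 ≤ A')
    (hup : |B| + 2 * K ≤ K') (hupA : 2 * A ≤ A')
    (hK'B : 1 + K ^ 2 + K * |B| ≤ K' * |B|)
    (hA'B : (K ^ 2 + 1) * A + K * A * |B| ≤ A' * |B|)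
    (hAA' : A ≤ A')
    (X : Type u) (Y : Type v) [MetricSpace X] [MetricSpace Y]
    (γ : X → ℝ) (ψ : X → Y)
    (hγ : CoarseLipschitzWith K A (fun a b : X => dist a b) (fun a b : ℝ => dist a b) γ)
    (hψ : IsQIWith K A (fun a b : X => dist a b) (fun a b : Y => dist a b) ψ) :
    IsQIWith K' A' (prodDist fun a b : X => dist a b)
      (prodDist fun a b : Y => dist a b)
      (fun p : ℝ × X => (B * p.1 + γ p.2, ψ p.2)) := by
  have hBpos : 0 < |B| := abs_pos.mpr hB
  obtain ⟨_, _, hψd, hψs⟩ := hψ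
  have hKpos : (0:ℝ) < K := lt_of_lt_of_le one_pos hK
  have hK'pos : (0:ℝ) < K' := lt_of_lt_of_le one_pos hK'1
  refine ⟨hK'1, hA'0, ?_, ?_⟩
  · intro p q
    simp only [prodDist]
    have hΔ0 : (0:ℝ) ≤ dist p.2 q.2 := dist_nonneg
    have hγd : |γ p.2 - γ q.2| ≤ K * dist p.2 q.2 + A := by
      simpa [Real.dist_eq] using hγ p.2 q.2
    have hts : |p.1 - q.1| ≤ Real.sqrt (|p.1 - q.1| ^ 2 + dist p.2 q.2 ^ 2) :=
      aux_left (p.1 - q.1) (dist p.2 q.2)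
    have hds : dist p.2 q.2 ≤ Real.sqrt (|p.1 - q.1| ^ 2 + dist p.2 q.2 ^ 2) :=
      aux_right (p.1 - q.1) (dist p.2 q.2) hΔ0
    have hs0 : 0 ≤ Real.sqrt (|p.1 - q.1| ^ 2 + dist p.2 q.2 ^ 2) := Real.sqrt_nonneg _
    have hS0 : 0 ≤ Real.sqrt (|B * p.1 + γ p.2 - (B * q.1 + γ q.2)| ^ 2
        + dist (ψ p.2) (ψ q.2) ^ 2) := Real.sqrt_nonneg _
    have hfirst : |B * p.1 + γ p.2 - (B * q.1 + γ q.2)| ≤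
        Real.sqrt (|B * p.1 + γ p.2 - (B * q.1 + γ q.2)| ^ 2 + dist (ψ p.2) (ψ q.2) ^ 2) :=
      aux_left _ _
    have hsecond : dist (ψ p.2) (ψ q.2) ≤
        Real.sqrt (|B * p.1 + γ p.2 - (B * q.1 + γ q.2)| ^ 2 + dist (ψ p.2) (ψ q.2) ^ 2) :=
      aux_right _ _ dist_nonneg
    have hψlow : dist p.2 q.2 / K - A ≤ dist (ψ p.2) (ψ q.2) := (hψd p.2 q.2).1
    have hψup : dist (ψ p.2) (ψ q.2) ≤ K * dist p.2 q.2 + A := (hψd p.2 q.2).2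
    have hΔS : dist p.2 q.2 ≤
        K * Real.sqrt (|B * p.1 + γ p.2 - (B * q.1 + γ q.2)| ^ 2 + dist (ψ p.2) (ψ q.2) ^ 2)
          + K * A := by
      have h2 : dist p.2 q.2 / K ≤
          Real.sqrt (|B * p.1 + γ p.2 - (B * q.1 + γ q.2)| ^ 2 + dist (ψ p.2) (ψ q.2) ^ 2)
            + A := by linarith
      have := (div_le_iff₀ hKpos).mp h2
      nlinarith
    have habsB : |B * (p.1 - q.1)| = |B| * |p.1 - q.1| := abs_mul B (p.1 - q.1)
    have hΔtS : |B| * |p.1 - q.1| ≤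
        Real.sqrt (|B * p.1 + γ p.2 - (B * q.1 + γ q.2)| ^ 2 + dist (ψ p.2) (ψ q.2) ^ 2)
          + K * dist p.2 q.2 + A := by
      rw [← habsB]
      have he : B * (p.1 - q.1) = (B * p.1 + γ p.2 - (B * q.1 + γ q.2)) - (γ p.2 - γ q.2) := by
        ring
      calc |B * (p.1 - q.1)|
          ≤ |B * p.1 + γ p.2 - (B * q.1 + γ q.2)| + |γ p.2 - γ q.2| := by
            rw [he]; exact abs_sub _ _
        _ ≤ Real.sqrt (|B * p.1 + γ p.2 - (B * q.1 + γ q.2)| ^ 2 + dist (ψ p.2) (ψ q.2) ^ 2)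
              + (K * dist p.2 q.2 + A) := add_le_add hfirst hγd
        _ = _ + K * dist p.2 q.2 + A := by ring
    constructor
    · -- lower bound
      have hsle : Real.sqrt (|p.1 - q.1| ^ 2 + dist p.2 q.2 ^ 2) ≤ |p.1 - q.1| + dist p.2 q.2 :=
        aux_add (p.1 - q.1) (dist p.2 q.2) hΔ0
      exact arith_lower K A (|B|) K' A' (|p.1 - q.1|) (dist p.2 q.2) _ _
        hKpos hA hBpos hK'1 hA'0 hS0 hsle hΔS hΔtS hK'B hA'B
    · -- upper bound
      have hSle : Real.sqrt (|B * p.1 + γ p.2 - (B * q.1 + γ q.2)| ^ 2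
            + dist (ψ p.2) (ψ q.2) ^ 2)
          ≤ |B * p.1 + γ p.2 - (B * q.1 + γ q.2)| + dist (ψ p.2) (ψ q.2) :=
        aux_add _ _ dist_nonneg
      have h1 : |B * p.1 + γ p.2 - (B * q.1 + γ q.2)| ≤
          |B| * |p.1 - q.1| + K * dist p.2 q.2 + A := by
        have he : B * p.1 + γ p.2 - (B * q.1 + γ q.2) = B * (p.1 - q.1) + (γ p.2 - γ q.2) := by
          ring
        calc |B * p.1 + γ p.2 - (B * q.1 + γ q.2)|
            ≤ |B * (p.1 - q.1)| + |γ p.2 - γ q.2| := by rw [he]; exact abs_add_le _ _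
          _ ≤ |B| * |p.1 - q.1| + (K * dist p.2 q.2 + A) := by rw [habsB]; linarith
          _ = |B| * |p.1 - q.1| + K * dist p.2 q.2 + A := by ring
      refine arith_upper K A (|B|) K' A' (|p.1 - q.1|) (dist p.2 q.2) _ _
        hKpos (abs_nonneg B) hs0 hts hds ?_ hup hupA
      linarith
  · -- surjectivity
    intro q
    obtain ⟨x, hx⟩ := hψs q.2
    refine ⟨((q.1 - γ x) / B, x), ?_⟩
    simp only [prodDist]
    have he : B * ((q.1 - γ x) / B) + γ x - q.1 = 0 := by field_simp; ring
    have h0 : |B * ((q.1 - γ x) / B) + γ x - q.1| ^ 2 = 0 := by rw [he]; simp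
    rw [h0, zero_add, Real.sqrt_sq dist_nonneg]
    exact le_trans hx hAA'

/-- If `γ : X → ℝ` is `(K, A)`-coarse Lipschitz, `ψ : X → Y` is a
`(K, A)`-quasi-isometry and `B ≠ 0`, then `(t, x) ↦ (B t + γ x, ψ x)` is a
`(K', A')`-quasi-isometry `ℝ × X → ℝ × Y`, with `K'`, `A'` depending only on `K, A, B`. -/
theorem stmt16 (K A B : ℝ) (hK : 1 ≤ K) (hA : 0 ≤ A) (hB : B ≠ 0) :
    ∃ K' A' : ℝ, 1 ≤ K' ∧ 0 ≤ A' ∧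
      ∀ (X : Type u) (Y : Type v) [MetricSpace X] [MetricSpace Y],
        IsGeodesicSpace X → IsGeodesicSpace Y →
        ∀ (γ : X → ℝ) (ψ : X → Y),
          CoarseLipschitzWith K A (fun a b : X => dist a b) (fun a b : ℝ => dist a b) γ →
          IsQIWith K A (fun a b : X => dist a b) (fun a b : Y => dist a b) ψ →
          IsQIWith K' A' (prodDist fun a b : X => dist a b)
            (prodDist fun a b : Y => dist a b)
            (fun p : ℝ × X => (B * p.1 + γ p.2, ψ p.2)) := by
  have hBpos : 0 < |B| := abs_pos.mpr hB
  have hfrac : (0:ℝ) < (1 + K ^ 2) / |B| := by positivity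
  have hfrac2 : (0:ℝ) ≤ (K ^ 2 + 1) * A / |B| := by positivity
  refine ⟨|B| + 3 * K + (1 + K ^ 2) / |B|, K * A + 2 * A + (K ^ 2 + 1) * A / |B|, ?_, ?_, ?_⟩
  · nlinarith [abs_nonneg B]
  · positivity
  intro X Y _ _ _ _ γ ψ hγ hψ
  apply stmt16_aux K A B _ _ hK hA hB
  · nlinarith [abs_nonneg B]
  · positivity
  · nlinarith [abs_nonneg B]
  · nlinarith
  · have h1 : (1 + K ^ 2) / |B| * |B| = 1 + K ^ 2 := div_mul_cancel₀ _ (ne_of_gt hBpos)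
    nlinarith [abs_nonneg B]
  · have h1 : (K ^ 2 + 1) * A / |B| * |B| = (K ^ 2 + 1) * A := div_mul_cancel₀ _ (ne_of_gt hBpos)
    nlinarith [abs_nonneg B]
  · nlinarith
  · exact hγ
  · exact hψ
end
end

section
/- Let Y and Y' be metric spaces, let K ≥ 1, A ≥ 0, and let B be a nonzero real number. Suppose γ : Y → ℝ and ψ : Y → Y' are maps such that φ : ℝ × Y → ℝ × Y' defined by φ(t,y) = (B·t + γ(y), ψ(y)) is a (K,A)-quasi-isometry. Then ψ : Y → Y' is a (K',A')-quasi-isometry and γ : Y → ℝ is (K',A')-coarse Lipschitz, where K' and A' depend only on K and A. -/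
noncomputable section

universe u v

lemma sqrt_left_le {a b : ℝ} : |a| ≤ Real.sqrt (a ^ 2 + b ^ 2) := by
  have h : Real.sqrt (a ^ 2) ≤ Real.sqrt (a ^ 2 + b ^ 2) :=
    Real.sqrt_le_sqrt (le_add_of_nonneg_right (sq_nonneg b))
  rwa [Real.sqrt_sq_eq_abs] at h

lemma sqrt_right_le {a b : ℝ} (hb : 0 ≤ b) : b ≤ Real.sqrt (a ^ 2 + b ^ 2) := by
  have h : Real.sqrt (b ^ 2) ≤ Real.sqrt (a ^ 2 + b ^ 2) :=
    Real.sqrt_le_sqrt (le_add_of_nonneg_left (sq_nonneg a))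
  rwa [Real.sqrt_sq hb] at h

/-- If `(t, y) ↦ (B t + γ y, ψ y)` is a `(K, A)`-quasi-isometry
`ℝ × Y → ℝ × Y'` with `B ≠ 0`, then `ψ` is a `(K', A')`-quasi-isometry and `γ` is
`(K', A')`-coarse Lipschitz, with `K'`, `A'` depending only on `K` and `A`. -/
theorem stmt17 (K A : ℝ) (hK : 1 ≤ K) (hA : 0 ≤ A) :
    ∃ K' A' : ℝ, 1 ≤ K' ∧ 0 ≤ A' ∧
      ∀ (Y : Type u) (Y' : Type v) [MetricSpace Y] [MetricSpace Y'] (B : ℝ), B ≠ 0 →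
        ∀ (γ : Y → ℝ) (ψ : Y → Y'),
          IsQIWith K A (prodDist fun a b : Y => dist a b)
            (prodDist fun a b : Y' => dist a b)
            (fun p : ℝ × Y => (B * p.1 + γ p.2, ψ p.2)) →
          (IsQIWith K' A' (fun a b : Y => dist a b) (fun a b : Y' => dist a b) ψ ∧
           CoarseLipschitzWith K' A' (fun a b : Y => dist a b)
             (fun a b : ℝ => dist a b) γ) := by
  refine ⟨K, A, hK, hA, ?_⟩
  intro Y Y' _ _ B hB γ ψ hφ
  obtain ⟨-, -, hbnd, hsurj⟩ := hφ
  have hK0 : (0:ℝ) < K := lt_of_lt_of_le one_pos hK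
  -- upper bound from comparing (0,y) and (0,y')
  have hupper : ∀ y y' : Y,
      Real.sqrt ((γ y - γ y') ^ 2 + dist (ψ y) (ψ y') ^ 2) ≤ K * dist y y' + A := by
    intro y y'
    have h := (hbnd (0, y) (0, y')).2
    simp only [prodDist] at h
    simpa [sq_abs, Real.sqrt_sq dist_nonneg] using h
  have hdY : ∀ y y' : Y, dist y y' = Real.sqrt (|(0:ℝ) - 0| ^ 2 + dist y y' ^ 2) := by
    intro y y'
    simp [Real.sqrt_sq dist_nonneg]
  constructor
  · refine ⟨hK, hA, ?_, ?_⟩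
    · intro y y'
      constructor
      · -- lower bound: choose t cancelling γ
        set t : ℝ := (γ y' - γ y) / B with ht
        have hBt : B * t + γ y = B * 0 + γ y' := by
          rw [ht, mul_div_cancel₀ _ hB]; ring
        have h := (hbnd (t, y) (0, y')).1
        simp only [prodDist] at h
        rw [hBt] at h
        simp only [sub_self, abs_zero] at h
        have h2 : Real.sqrt ((0:ℝ) ^ 2 + dist (ψ y) (ψ y') ^ 2) = dist (ψ y) (ψ y') := by
          simp [Real.sqrt_sq dist_nonneg]
        rw [h2] at h
        refine le_trans ?_ h
        have hle : dist y y' ≤ Real.sqrt (|t - 0| ^ 2 + dist y y' ^ 2) :=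
          sqrt_right_le dist_nonneg
        have h3 : dist y y' / K ≤ Real.sqrt (|t - 0| ^ 2 + dist y y' ^ 2) / K := by
          gcongr
        linarith
      · -- upper bound
        have h := hupper y y'
        calc dist (ψ y) (ψ y') ≤ Real.sqrt ((γ y - γ y') ^ 2 + dist (ψ y) (ψ y') ^ 2) :=
              sqrt_right_le dist_nonneg
          _ ≤ K * dist y y' + A := h
    · -- coarse surjectivity
      intro y'
      obtain ⟨⟨t, y⟩, h⟩ := hsurj (0, y')
      refine ⟨y, ?_⟩
      simp only [prodDist] at h
      exact le_trans (sqrt_right_le dist_nonneg) h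
  · -- γ coarse Lipschitz
    intro y y'
    have h := hupper y y'
    calc dist (γ y) (γ y') = |γ y - γ y'| := Real.dist_eq _ _
      _ ≤ Real.sqrt ((γ y - γ y') ^ 2 + dist (ψ y) (ψ y') ^ 2) := sqrt_left_le
      _ ≤ K * dist y y' + A := h

end
end
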